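/- arXiv:2112.11320 — 3 statements merged into one kernel-verified Lean document; each statement's English description precedes it below -/
import Mathlib

section
/- Let b^LAB be the unique cross-conditional regret minimizing bid in the multi-unit uniform-price auction and let b^PAB be the unique minimax-loss bid in the multi-unit pay-as-bid auction. Then b^LAB is on average steeper than b^PAB: (b^LAB_1 − b^LAB_M)/M ≥ (b^PAB_1 − b^PAB_M)/M. In fact b^LAB_M = b^PAB_M = v_M/(M+1) and b^LAB_1 ≥ b^PAB_1. -/
noncomputable section

/-- Positive part `(x)₊ = max(x,0)`. -/
def pos (x : ℝ) : ℝ := max x 0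

/-- A bid vector for `M` units: weakly decreasing on `{1,…,M}` and nonnegative at `M`. -/
def IsBid (M : ℕ) (b : ℕ → ℝ) : Prop :=
  (∀ k, 1 ≤ k → k < M → b (k + 1) ≤ b k) ∧ 0 ≤ b M

/-- A value vector for `M` units: weakly decreasing on `{1,…,M}` and nonnegative at `M`. -/
def IsVal (M : ℕ) (v : ℕ → ℝ) : Prop :=
  (∀ k, 1 ≤ k → k < M → v (k + 1) ≤ v k) ∧ 0 ≤ v M

/-- Extension of the bid vector by the convention `b_{M+1} = 0`. -/
def bext (M : ℕ) (b : ℕ → ℝ) (k : ℕ) : ℝ := if k ≤ M then b k else 0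

/-- Conditional regret at quantity `k ∈ {0,…,M}` in the multi-unit pay-as-bid auction:
`R_k(b) = Σ_{j=1}^k (b_j − b_{k+1}) + Σ_{j=k+1}^M (v_j − b_{k+1})₊`. -/
def Rpab (M : ℕ) (v b : ℕ → ℝ) (k : ℕ) : ℝ :=
  (∑ j ∈ Finset.Icc 1 k, (b j - bext M b (k + 1)))
    + ∑ j ∈ Finset.Icc (k + 1) M, pos (v j - bext M b (k + 1))

/-- Maximum loss in the multi-unit pay-as-bid auction: `L^PAB(b) = max_{0 ≤ k ≤ M} R_k(b)`. -/
def Lpab (M : ℕ) (v b : ℕ → ℝ) : ℝ :=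
  (Finset.Icc 0 M).sup' (Finset.nonempty_Icc.mpr (Nat.zero_le M)) (Rpab M v b)

/-- A minimax-loss bid in the multi-unit pay-as-bid auction. -/
def IsMinimaxPAB (M : ℕ) (v b : ℕ → ℝ) : Prop :=
  IsBid M b ∧ ∀ b', IsBid M b' → Lpab M v b ≤ Lpab M v b'
/-- Overbidding regret at quantity `k ∈ {1,…,M}` in the multi-unit uniform-price auction:
`O_k(b) = k·b_k`. -/
def Olab (b : ℕ → ℝ) (k : ℕ) : ℝ := (k : ℝ) * b k

/-- Underbidding regret at quantity `k − 1` in the multi-unit uniform-price auction: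
`U_{k−1}(b) = Σ_{j=k}^M (v_j − b_k)₊`. -/
def Ulab (M : ℕ) (v b : ℕ → ℝ) (k : ℕ) : ℝ :=
  ∑ j ∈ Finset.Icc k M, pos (v j - b k)

/-- Maximum loss in the multi-unit uniform-price auction:
`L^LAB(b) = max_{1 ≤ k ≤ M} max(O_k(b), U_{k−1}(b))`. -/
def Llab (M : ℕ) (hM : 1 ≤ M) (v b : ℕ → ℝ) : ℝ :=
  (Finset.Icc 1 M).sup' (Finset.nonempty_Icc.mpr hM)
    (fun k => max (Olab b k) (Ulab M v b k))

/-- A cross-conditional regret minimizing bid: `k·b_k = Σ_{j=k}^M (v_j − b_k)₊` for all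
`k ∈ {1,…,M}`. -/
def IsCrossCond (M : ℕ) (v b : ℕ → ℝ) : Prop :=
  ∀ k ∈ Finset.Icc 1 M, (k : ℝ) * b k = ∑ j ∈ Finset.Icc k M, pos (v j - b k)

/-- A minimax-loss bid in the multi-unit uniform-price auction. -/
def IsMinimaxLAB (M : ℕ) (hM : 1 ≤ M) (v b : ℕ → ℝ) : Prop :=
  IsBid M b ∧ ∀ b', IsBid M b' → Llab M hM v b ≤ Llab M hM v b'

namespace Aux

lemma pos_nonneg (x : ℝ) : 0 ≤ pos x := le_max_right _ _
lemma le_pos (x : ℝ) : x ≤ pos x := le_max_left _ _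
lemma pos_of_nonneg {x : ℝ} (h : 0 ≤ x) : pos x = x := max_eq_left h
lemma pos_of_nonpos {x : ℝ} (h : x ≤ 0) : pos x = 0 := max_eq_right h
lemma pos_mono : Monotone pos := fun _ _ h => max_le_max h le_rfl
lemma pos_anti (a : ℝ) {x y : ℝ} (h : x ≤ y) : pos (a - y) ≤ pos (a - x) :=
  pos_mono (by linarith)

/-- `φ_k(x) = Σ_{j=k}^M (v_j − x)₊ − k x`. -/
def phi (M : ℕ) (v : ℕ → ℝ) (k : ℕ) (x : ℝ) : ℝ :=
  (∑ j ∈ Finset.Icc k M, pos (v j - x)) - (k : ℝ) * x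

lemma phi_anti (M : ℕ) (v : ℕ → ℝ) {k : ℕ} (hk : 1 ≤ k) : StrictAnti (phi M v k) := by
  intro x y hxy
  unfold phi
  have h1 : ∑ j ∈ Finset.Icc k M, pos (v j - y) ≤ ∑ j ∈ Finset.Icc k M, pos (v j - x) :=
    Finset.sum_le_sum fun j _ => pos_anti _ hxy.le
  have h2 : (k : ℝ) * x < (k : ℝ) * y := by
    have : (1 : ℝ) ≤ (k : ℝ) := by exact_mod_cast hk
    nlinarith
  linarith

lemma phi_cont (M : ℕ) (v : ℕ → ℝ) (k : ℕ) : Continuous (phi M v k) := by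
  unfold phi pos
  exact Continuous.sub (continuous_finset_sum _ fun j _ =>
    ((continuous_const.sub continuous_id).max continuous_const))
    (continuous_const.mul continuous_id)

lemma phi_exists (M : ℕ) (v : ℕ → ℝ) {k : ℕ} (hk : 1 ≤ k) (s : ℝ) :
    ∃ x, phi M v k x = s := by
  set hi : ℝ := |s| + ∑ j ∈ Finset.Icc k M, pos (v j) with hhi
  have hsum_nn : (0:ℝ) ≤ ∑ j ∈ Finset.Icc k M, pos (v j) :=
    Finset.sum_nonneg fun j _ => pos_nonneg _
  have hhi_nn : 0 ≤ hi := by positivity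
  have hlo : s ≤ phi M v k (-|s|) := by
    have h1 : (0:ℝ) ≤ ∑ j ∈ Finset.Icc k M, pos (v j - (-|s|)) :=
      Finset.sum_nonneg fun j _ => pos_nonneg _
    have hk1 : (1:ℝ) ≤ (k : ℝ) := by exact_mod_cast hk
    have : s ≤ (k : ℝ) * |s| := by
      nlinarith [abs_nonneg s, le_abs_self s]
    unfold phi
    nlinarith
  have hhi' : phi M v k hi ≤ s := by
    have hz : ∀ j ∈ Finset.Icc k M, pos (v j - hi) = 0 := by
      intro j hj
      apply pos_of_nonpos
      have h1 : pos (v j) ≤ ∑ l ∈ Finset.Icc k M, pos (v l) :=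
        Finset.single_le_sum (fun l _ => pos_nonneg _) hj
      have := le_pos (v j)
      have := abs_nonneg s
      simp only [hhi]; linarith
    have hsum0 : ∑ j ∈ Finset.Icc k M, pos (v j - hi) = 0 := Finset.sum_eq_zero hz
    have hk1 : (1:ℝ) ≤ (k : ℝ) := by exact_mod_cast hk
    unfold phi
    rw [hsum0]
    have : hi ≤ (k:ℝ) * hi := by nlinarith
    have := neg_abs_le s
    linarith
  have hab : (-|s|) ≤ hi := by have := abs_nonneg s; linarith
  have := intermediate_value_Icc' hab (phi_cont M v k).continuousOn
    (by constructor <;> assumption : s ∈ Set.Icc (phi M v k hi) (phi M v k (-|s|)))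
  obtain ⟨x, _, hx⟩ := this
  exact ⟨x, hx⟩

/-- the unique `x` with `φ_k(x) = s` (for `k ≥ 1`). -/
def sol (M : ℕ) (v : ℕ → ℝ) (k : ℕ) (s : ℝ) : ℝ :=
  if hk : 1 ≤ k then Classical.choose (phi_exists M v hk s) else 0

lemma sol_spec (M : ℕ) (v : ℕ → ℝ) {k : ℕ} (hk : 1 ≤ k) (s : ℝ) :
    phi M v k (sol M v k s) = s := by
  rw [sol, dif_pos hk]; exact Classical.choose_spec (phi_exists M v hk s)

/-- `Sp M v i = S_{M+1−i} = Σ_{j=M+1−i}^M β_j`. -/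
def Sp (M : ℕ) (v : ℕ → ℝ) : ℕ → ℝ
  | 0 => 0
  | (i+1) => Sp M v i + sol M v (M - i) (Sp M v i)

/-- the equalizing bid. -/
def beta (M : ℕ) (v : ℕ → ℝ) (k : ℕ) : ℝ := sol M v k (Sp M v (M - k))

lemma phi_beta (M : ℕ) (v : ℕ → ℝ) {k : ℕ} (hk : 1 ≤ k) :
    phi M v k (beta M v k) = Sp M v (M - k) := sol_spec M v hk _

lemma Sp_succ_eq (M : ℕ) (v : ℕ → ℝ) {k : ℕ} (hk1 : 1 ≤ k) (hkM : k ≤ M) :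
    Sp M v (M - k + 1) = Sp M v (M - k) + beta M v k := by
  have h : M - (M - k) = k := by omega
  show Sp M v (M - k) + sol M v (M - (M - k)) (Sp M v (M - k)) = _
  rw [h]; rfl

variable (M : ℕ) (v : ℕ → ℝ)

lemma sum_Icc_bot {a b : ℕ} (h : a ≤ b) (f : ℕ → ℝ) :
    ∑ i ∈ Finset.Icc a b, f i = f a + ∑ i ∈ Finset.Icc (a+1) b, f i := by
  rw [Finset.Icc_add_one_left_eq_Ioc, ← Finset.Ioc_insert_left h, Finset.sum_insert (by simp)]

lemma Sp_eq_sum : ∀ i, i ≤ M → Sp M v i = ∑ j ∈ Finset.Icc (M + 1 - i) M, beta M v j := by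
  intro i
  induction i with
  | zero => intro _; simp [Sp]
  | succ i ih =>
    intro hi
    have hiM : i ≤ M := by omega
    have hsol : sol M v (M - i) (Sp M v i) = beta M v (M - i) := by
      rw [beta, show M - (M - i) = i by omega]
    show Sp M v i + sol M v (M - i) (Sp M v i) = _
    rw [hsol, ih hiM, show M + 1 - (i+1) = M - i by omega,
      sum_Icc_bot (show M - i ≤ M by omega), show M - i + 1 = M + 1 - i by omega]
    ring

/-- `φ_k(x) = (v_k − x)₊ + φ_{k+1}(x) + x` for `k ≤ M`. -/
lemma phi_split {k : ℕ} (hk : k ≤ M) (x : ℝ) :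
    phi M v k x = pos (v k - x) + phi M v (k+1) x + x := by
  unfold phi
  rw [sum_Icc_bot hk]
  push_cast
  ring

lemma beta_ge_succ {k : ℕ} (hk1 : 1 ≤ k) (hk : k < M) :
    beta M v (k+1) ≤ beta M v k := by
  have h1 : phi M v k (beta M v (k+1)) =
      pos (v k - beta M v (k+1)) + Sp M v (M - (k+1)) + beta M v (k+1) := by
    rw [phi_split M v hk.le, phi_beta M v (by omega : 1 ≤ k + 1)]
  have h2 : Sp M v (M - k) = Sp M v (M - (k+1)) + beta M v (k+1) := by
    have := Sp_succ_eq M v (show 1 ≤ k + 1 by omega) (show k + 1 ≤ M by omega)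
    rw [show M - (k+1) + 1 = M - k by omega] at this
    exact this
  have h3 : phi M v k (beta M v k) ≤ phi M v k (beta M v (k+1)) := by
    rw [phi_beta M v hk1, h1, h2]
    have := pos_nonneg (v k - beta M v (k+1))
    linarith
  exact ((phi_anti M v hk1).le_iff_ge).mp h3

lemma beta_M_nonneg (hM : 1 ≤ M) : 0 ≤ beta M v M := by
  have h := phi_beta M v hM (k := M)
  rw [Nat.sub_self] at h
  have h0 : Sp M v 0 = 0 := rfl
  rw [h0] at h
  unfold phi at h
  have h1 : (0:ℝ) ≤ ∑ j ∈ Finset.Icc M M, pos (v j - beta M v M) :=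
    Finset.sum_nonneg fun j _ => pos_nonneg _
  have hMR : (1:ℝ) ≤ (M:ℝ) := by exact_mod_cast hM
  nlinarith

/-- generic chain lemma for weakly decreasing vectors. -/
lemma chain {f : ℕ → ℝ} (hf : ∀ k, 1 ≤ k → k < M → f (k+1) ≤ f k) :
    ∀ k, k ≤ M → ∀ j, 1 ≤ j → j ≤ k → f k ≤ f j := by
  intro k
  induction k with
  | zero => intro _ j h1 h2; omega
  | succ k ih =>
    intro hk j h1 h2
    rcases Nat.eq_or_lt_of_le h2 with h | h
    · subst h; exact le_rfl
    · have hjk : j ≤ k := by omega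
      exact (hf k (by omega) (by omega)).trans (ih (by omega) j h1 hjk)

lemma beta_nonneg (hM : 1 ≤ M) {k : ℕ} (h1 : 1 ≤ k) (h2 : k ≤ M) : 0 ≤ beta M v k :=
  (beta_M_nonneg M v hM).trans
    (chain M (fun k a b => beta_ge_succ M v a b) M le_rfl k h1 h2)

lemma isBid_beta (hM : 1 ≤ M) : IsBid M (beta M v) :=
  ⟨fun k h1 h2 => beta_ge_succ M v h1 h2, beta_M_nonneg M v hM⟩

lemma bid_nonneg {b : ℕ → ℝ} (hb : IsBid M b) {j : ℕ} (h1 : 1 ≤ j) (h2 : j ≤ M) :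
    0 ≤ b j :=
  hb.2.trans (chain M hb.1 M le_rfl j h1 h2)

lemma Rpab_M (b : ℕ → ℝ) : Rpab M v b M = ∑ j ∈ Finset.Icc 1 M, b j := by
  unfold Rpab bext
  rw [if_neg (by omega)]
  simp

lemma Rpab_lt (b : ℕ → ℝ) {k : ℕ} (hk : k < M) :
    Rpab M v b k = (∑ j ∈ Finset.Icc 1 k, b j)
      + ((∑ j ∈ Finset.Icc (k+1) M, pos (v j - b (k+1))) - (k:ℝ) * b (k+1)) := by
  unfold Rpab bext
  rw [if_pos (by omega : k + 1 ≤ M), Finset.sum_sub_distrib, Finset.sum_const,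
    Nat.card_Icc]
  simp only [nsmul_eq_mul]
  push_cast [Nat.add_sub_cancel]
  ring

lemma Rpab_beta_eq (hM : 1 ≤ M) {k : ℕ} (hk : k ≤ M) :
    Rpab M v (beta M v) k = Sp M v M := by
  rcases Nat.eq_or_lt_of_le hk with h | h
  · rw [h, Rpab_M, Sp_eq_sum M v M le_rfl, Nat.add_sub_cancel_left]
  · rw [Rpab_lt M v _ h]
    have hphi : (∑ j ∈ Finset.Icc (k+1) M, pos (v j - beta M v (k+1)))
        = Sp M v (M - (k+1)) + ((k:ℝ)+1) * beta M v (k+1) := by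
      have := phi_beta M v (show 1 ≤ k+1 by omega)
      unfold phi at this
      push_cast at this ⊢
      linarith
    rw [hphi]
    have h2 : Sp M v (M - k) = Sp M v (M - (k+1)) + beta M v (k+1) := by
      have := Sp_succ_eq M v (show 1 ≤ k + 1 by omega) (show k + 1 ≤ M by omega)
      rw [show M - (k+1) + 1 = M - k by omega] at this
      exact this
    have h3 : Sp M v (M - k) = ∑ j ∈ Finset.Icc (k+1) M, beta M v j := by
      rw [Sp_eq_sum M v (M - k) (by omega), show M + 1 - (M - k) = k + 1 by omega]
    have h4 : (∑ j ∈ Finset.Icc 1 k, beta M v j) + ∑ j ∈ Finset.Icc (k+1) M, beta M v j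
        = ∑ j ∈ Finset.Icc 1 M, beta M v j := by
      rw [show Finset.Icc 1 k = Finset.Ioc 0 k from rfl, Finset.Icc_add_one_left_eq_Ioc]
      exact Finset.sum_Ioc_consecutive _ (by omega) h.le
    have h5 : Sp M v M = ∑ j ∈ Finset.Icc 1 M, beta M v j := by
      rw [Sp_eq_sum M v M le_rfl, Nat.add_sub_cancel_left]
    rw [h5, ← h4, ← h3, h2]
    ring

lemma Lpab_beta (hM : 1 ≤ M) : Lpab M v (beta M v) = Sp M v M := by
  apply le_antisymm
  · apply Finset.sup'_le
    intro k hk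
    rw [Rpab_beta_eq M v hM (Finset.mem_Icc.mp hk).2]
  · have h0 : (0:ℕ) ∈ Finset.Icc 0 M := by simp
    calc Sp M v M = Rpab M v (beta M v) 0 := (Rpab_beta_eq M v hM (Nat.zero_le M)).symm
    _ ≤ _ := Finset.le_sup' _ h0

/-! ### multipliers -/

/-- `N_k = #{j ∈ [k,M] : v_j > β_k}`. -/
def Nnum (k : ℕ) : ℕ := ((Finset.Icc k M).filter (fun j => beta M v k < v j)).card

/-- `Ap t = A_{M−t} = Σ_{i=M−t}^M λ_i`. -/
def Ap : ℕ → ℝ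
  | 0 => 1
  | (t+1) => Ap t + Ap t / (((M - t - 1 : ℕ) : ℝ) + (Nnum M v (M - t) : ℝ))

/-- the dual weights `λ_k`, `k ∈ [0,M]`. -/
def lam (k : ℕ) : ℝ :=
  if k = M then 1 else Ap M v (M - k - 1) / ((k : ℝ) + (Nnum M v (k+1) : ℝ))

lemma Ap_pos : ∀ t, 0 < Ap M v t := by
  intro t
  induction t with
  | zero => exact one_pos
  | succ t ih =>
    have h : (0:ℝ) ≤ Ap M v t / (((M - t - 1 : ℕ) : ℝ) + (Nnum M v (M - t) : ℝ)) := by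
      positivity
    show 0 < Ap M v t + _
    linarith

lemma lam_nonneg (k : ℕ) : 0 ≤ lam M v k := by
  unfold lam
  split_ifs
  · exact zero_le_one
  · have := Ap_pos M v (M - k - 1)
    positivity

lemma lam_pos (hN1 : 1 ≤ Nnum M v 1) {k : ℕ} (hk : k ≤ M) : 0 < lam M v k := by
  unfold lam
  split_ifs with h
  · exact one_pos
  · apply div_pos (Ap_pos M v _)
    rcases Nat.eq_zero_or_pos k with rfl | hk1
    · have : (1:ℝ) ≤ (Nnum M v 1 : ℝ) := by exact_mod_cast hN1
      simp only [Nat.cast_zero, zero_add]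
      linarith
    · have h1 : (1:ℝ) ≤ (k:ℝ) := by exact_mod_cast hk1
      have h2 : (0:ℝ) ≤ (Nnum M v (k+1) : ℝ) := Nat.cast_nonneg _
      linarith

lemma A_eq : ∀ d, d < M → ∑ i ∈ Finset.Icc (M - d) M, lam M v i = Ap M v d := by
  intro d
  induction d with
  | zero =>
    intro _
    rw [Nat.sub_zero, Finset.Icc_self, Finset.sum_singleton, lam, if_pos rfl]
    rfl
  | succ d ih =>
    intro hd
    rw [sum_Icc_bot (show M - (d+1) ≤ M by omega), show M - (d+1) + 1 = M - d by omega,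
      ih (by omega)]
    have hne : M - (d+1) ≠ M := by omega
    have hlam : lam M v (M - (d+1)) =
        Ap M v d / (((M - d - 1 : ℕ) : ℝ) + (Nnum M v (M - d) : ℝ)) := by
      rw [lam, if_neg hne, show M - (M - (d+1)) - 1 = d by omega,
        show M - (d+1) + 1 = M - d by omega, show (M - (d+1) : ℕ) = M - d - 1 by omega]
    rw [hlam]
    show _ = Ap M v d + Ap M v d / _
    ring

lemma lam_mul (hN1 : 1 ≤ Nnum M v 1) {k : ℕ} (hk : k < M) :
    lam M v k * ((k : ℝ) + (Nnum M v (k+1) : ℝ)) = Ap M v (M - k - 1) := by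
  rw [lam, if_neg hk.ne]
  apply div_mul_cancel₀
  rcases Nat.eq_zero_or_pos k with rfl | hk1
  · have : (1:ℝ) ≤ (Nnum M v 1 : ℝ) := by exact_mod_cast hN1
    simp only [Nat.cast_zero, zero_add]
    intro h; rw [h] at this; linarith
  · have h1 : (1:ℝ) ≤ (k:ℝ) := by exact_mod_cast hk1
    have h2 : (0:ℝ) ≤ (Nnum M v (k+1) : ℝ) := Nat.cast_nonneg _
    intro h; linarith [h ▸ (by linarith : (1:ℝ) ≤ (k:ℝ) + (Nnum M v (k+1) : ℝ))]

/-- `H_k(x) = Σ_{j=k+1}^M (v_j − x)₊ − k x`. -/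
def Hf (k : ℕ) (x : ℝ) : ℝ :=
  (∑ j ∈ Finset.Icc (k+1) M, pos (v j - x)) - (k:ℝ) * x

/-- pointwise optimality of `β_{k+1}` for the separable objective. -/
lemma pointwise (hN1 : 1 ≤ Nnum M v 1) {k : ℕ} (hk : k < M) (x : ℝ) :
    Ap M v (M - k - 1) * beta M v (k+1) + lam M v k * Hf M v k (beta M v (k+1)) ≤
      Ap M v (M - k - 1) * x + lam M v k * Hf M v k x := by
  set c := beta M v (k+1) with hc
  have hA := lam_mul M v hN1 hk
  have hl : 0 ≤ lam M v k := lam_nonneg M v k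
  have hterm : ∀ j ∈ Finset.Icc (k+1) M,
      (if c < v j then c - x else 0) ≤ pos (v j - x) - pos (v j - c) := by
    intro j _
    split_ifs with h
    · have h1 : pos (v j - c) = v j - c := pos_of_nonneg (by linarith)
      have h2 := le_pos (v j - x)
      linarith
    · have h1 : pos (v j - c) = 0 := pos_of_nonpos (by push_neg at h; linarith)
      have h2 := pos_nonneg (v j - x)
      linarith
  have hsum := Finset.sum_le_sum hterm
  have hcount : (∑ j ∈ Finset.Icc (k+1) M, if c < v j then c - x else 0)
      = (Nnum M v (k+1) : ℝ) * (c - x) := by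
    rw [← Finset.sum_filter, Finset.sum_const, Nnum]
    simp [nsmul_eq_mul]
    exact Or.inl rfl
  rw [hcount, Finset.sum_sub_distrib] at hsum
  have hHf : (Nnum M v (k+1) : ℝ) * (c - x) - (k:ℝ) * (x - c) ≤ Hf M v k x - Hf M v k c := by
    unfold Hf
    linarith
  have hmul := mul_le_mul_of_nonneg_left hHf hl
  have h2 : lam M v k * ((Nnum M v (k+1) : ℝ) * (c - x) - (k:ℝ) * (x - c))
      = Ap M v (M - k - 1) * (c - x) := by rw [← hA]; ring
  rw [h2, mul_sub, mul_sub] at hmul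
  linarith

/-- sum exchange. -/
lemma exchange (f g : ℕ → ℝ) :
    ∀ n, ∑ k ∈ Finset.Icc 0 n, f k * ∑ j ∈ Finset.Icc 1 k, g j
      = ∑ j ∈ Finset.Icc 1 n, (∑ i ∈ Finset.Icc j n, f i) * g j := by
  intro n
  induction n with
  | zero => simp
  | succ n ih =>
    have houter : ∑ j ∈ Finset.Icc 1 (n+1), (∑ i ∈ Finset.Icc j (n+1), f i) * g j
        = (∑ j ∈ Finset.Icc 1 n, (∑ i ∈ Finset.Icc j (n+1), f i) * g j)
          + (∑ i ∈ Finset.Icc (n+1) (n+1), f i) * g (n+1) :=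
      Finset.sum_Icc_succ_top (by omega) _
    have hinner : ∑ j ∈ Finset.Icc 1 n, (∑ i ∈ Finset.Icc j (n+1), f i) * g j
        = ∑ j ∈ Finset.Icc 1 n, ((∑ i ∈ Finset.Icc j n, f i) * g j + f (n+1) * g j) := by
      refine Finset.sum_congr rfl fun j hj => ?_
      rw [Finset.sum_Icc_succ_top ((Finset.mem_Icc.mp hj).2.trans (by omega))]
      ring
    rw [Finset.sum_Icc_succ_top (Nat.zero_le (n+1)), ih, houter, hinner,
      Finset.sum_add_distrib, ← Finset.mul_sum, Finset.Icc_self, Finset.sum_singleton,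
      Finset.sum_Icc_succ_top (show 1 ≤ n + 1 by omega) g]
    ring

lemma reindex (F : ℕ → ℝ) :
    ∀ n, ∑ j ∈ Finset.Icc 1 (n+1), F j = ∑ k ∈ Finset.Icc 0 n, F (k+1) := by
  intro n
  induction n with
  | zero => simp
  | succ n ih =>
    rw [Finset.sum_Icc_succ_top (show 1 ≤ n + 2 by omega),
      Finset.sum_Icc_succ_top (Nat.zero_le (n+1)), ih]

/-- decomposition of the weighted regret sum into separable pieces. -/
lemma decomp (hM : 1 ≤ M) (b : ℕ → ℝ) :
    ∑ k ∈ Finset.Icc 0 M, lam M v k * Rpab M v b k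
      = ∑ k ∈ Finset.Icc 0 (M-1),
          (Ap M v (M - k - 1) * b (k+1) + lam M v k * Hf M v k (b (k+1))) := by
  obtain ⟨m, rfl⟩ : ∃ m, M = m + 1 := ⟨M - 1, by omega⟩
  simp only [Nat.add_sub_cancel]
  rw [Finset.sum_Icc_succ_top (Nat.zero_le (m+1))]
  have hlast : lam (m+1) v (m+1) * Rpab (m+1) v b (m+1)
      = 1 * ∑ j ∈ Finset.Icc 1 (m+1), b j := by
    rw [lam, if_pos rfl, Rpab_M]
  have hsplit : ∀ k ∈ Finset.Icc 0 m, lam (m+1) v k * Rpab (m+1) v b k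
      = lam (m+1) v k * ∑ j ∈ Finset.Icc 1 k, b j
        + lam (m+1) v k * Hf (m+1) v k (b (k+1)) := by
    intro k hk
    have hkm : k < m + 1 := by have := (Finset.mem_Icc.mp hk).2; omega
    rw [Rpab_lt (m+1) v b hkm, Hf]
    ring
  rw [hlast, Finset.sum_congr rfl hsplit, Finset.sum_add_distrib]
  have hex : (∑ k ∈ Finset.Icc 0 m, lam (m+1) v k * ∑ j ∈ Finset.Icc 1 k, b j)
      + 1 * ∑ j ∈ Finset.Icc 1 (m+1), b j
      = ∑ j ∈ Finset.Icc 1 (m+1), (∑ i ∈ Finset.Icc j (m+1), lam (m+1) v i) * b j := by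
    rw [← exchange (lam (m+1) v) b (m+1), Finset.sum_Icc_succ_top (Nat.zero_le (m+1)),
      lam, if_pos rfl]
  have hA : ∀ j ∈ Finset.Icc 1 (m+1),
      (∑ i ∈ Finset.Icc j (m+1), lam (m+1) v i) * b j = Ap (m+1) v (m+1-j) * b j := by
    intro j hj
    obtain ⟨hj1, hj2⟩ := Finset.mem_Icc.mp hj
    rw [show Finset.Icc j (m+1) = Finset.Icc ((m+1) - ((m+1) - j)) (m+1) by
        congr 1; omega,
      A_eq (m+1) v ((m+1) - j) (by omega)]
  have hre : ∑ j ∈ Finset.Icc 1 (m+1), Ap (m+1) v (m+1-j) * b j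
      = ∑ k ∈ Finset.Icc 0 m, Ap (m+1) v (m-k) * b (k+1) := by
    rw [reindex (fun j => Ap (m+1) v (m+1-j) * b j) m]
    exact Finset.sum_congr rfl fun k hk => by rw [show m + 1 - (k+1) = m - k by omega]
  have hfin : ∀ k ∈ Finset.Icc 0 m, Ap (m+1) v (m-k) * b (k+1) = Ap (m+1) v (m+1-k-1) * b (k+1) := by
    intro k hk
    rw [show m + 1 - k - 1 = m - k by omega]
  calc (∑ k ∈ Finset.Icc 0 m, lam (m+1) v k * ∑ j ∈ Finset.Icc 1 k, b j)
        + (∑ k ∈ Finset.Icc 0 m, lam (m+1) v k * Hf (m+1) v k (b (k+1)))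
        + 1 * ∑ j ∈ Finset.Icc 1 (m+1), b j
      = (∑ j ∈ Finset.Icc 1 (m+1), (∑ i ∈ Finset.Icc j (m+1), lam (m+1) v i) * b j)
        + ∑ k ∈ Finset.Icc 0 m, lam (m+1) v k * Hf (m+1) v k (b (k+1)) := by
        rw [← hex]; ring
    _ = (∑ k ∈ Finset.Icc 0 m, Ap (m+1) v (m+1-k-1) * b (k+1))
        + ∑ k ∈ Finset.Icc 0 m, lam (m+1) v k * Hf (m+1) v k (b (k+1)) := by
        rw [Finset.sum_congr rfl hA, hre, Finset.sum_congr rfl hfin]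
    _ = _ := by rw [← Finset.sum_add_distrib]

/-- in the nondegenerate case all conditional regrets of a minimax bid equal `Sp M`. -/
lemma regret_eq (hM : 1 ≤ M) (hN1 : 1 ≤ Nnum M v 1) {b : ℕ → ℝ} (hb : IsBid M b)
    (hmin : ∀ b', IsBid M b' → Lpab M v b ≤ Lpab M v b') :
    ∀ k, k ≤ M → Rpab M v b k = Sp M v M := by
  have hLb : Lpab M v b ≤ Sp M v M := by
    have := hmin (beta M v) (isBid_beta M v hM)
    rwa [Lpab_beta M v hM] at this
  have hRle : ∀ k ∈ Finset.Icc 0 M, Rpab M v b k ≤ Sp M v M := fun k hk =>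
    (Finset.le_sup' (Rpab M v b) hk).trans hLb
  have hbeta_k : ∀ k ∈ Finset.Icc 0 (M-1),
      Ap M v (M - k - 1) * beta M v (k+1) + lam M v k * Hf M v k (beta M v (k+1))
        ≤ Ap M v (M - k - 1) * b (k+1) + lam M v k * Hf M v k (b (k+1)) := by
    intro k hk
    have : k < M := by have := (Finset.mem_Icc.mp hk).2; omega
    exact pointwise M v hN1 this (b (k+1))
  have hge : ∑ k ∈ Finset.Icc 0 M, lam M v k * Rpab M v (beta M v) k
      ≤ ∑ k ∈ Finset.Icc 0 M, lam M v k * Rpab M v b k := by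
    rw [decomp M v hM, decomp M v hM]
    exact Finset.sum_le_sum hbeta_k
  have hbeta_val : ∑ k ∈ Finset.Icc 0 M, lam M v k * Rpab M v (beta M v) k
      = ∑ k ∈ Finset.Icc 0 M, lam M v k * Sp M v M :=
    Finset.sum_congr rfl fun k hk => by
      rw [Rpab_beta_eq M v hM (Finset.mem_Icc.mp hk).2]
  have hle : ∑ k ∈ Finset.Icc 0 M, lam M v k * Rpab M v b k
      ≤ ∑ k ∈ Finset.Icc 0 M, lam M v k * Sp M v M :=
    Finset.sum_le_sum fun k hk =>
      mul_le_mul_of_nonneg_left (hRle k hk) (lam_nonneg M v k)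
  have hzero : ∑ k ∈ Finset.Icc 0 M, (lam M v k * Sp M v M - lam M v k * Rpab M v b k) = 0 := by
    rw [Finset.sum_sub_distrib]
    rw [hbeta_val] at hge
    linarith
  have hterms := (Finset.sum_eq_zero_iff_of_nonneg fun k hk => by
    have := mul_le_mul_of_nonneg_left (hRle k hk) (lam_nonneg M v k)
    linarith).mp hzero
  intro k hk
  have hkmem : k ∈ Finset.Icc 0 M := Finset.mem_Icc.mpr ⟨Nat.zero_le _, hk⟩
  have h := hterms k hkmem
  have hlamne : lam M v k ≠ 0 := (lam_pos M v hN1 hk).ne'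
  have : lam M v k * Sp M v M = lam M v k * Rpab M v b k := by linarith
  exact (mul_left_cancel₀ hlamne this).symm

/-- the two key facts about any minimax pay-as-bid bid. -/
lemma pab_keys (hM : 1 ≤ M) (hv : IsVal M v) {b : ℕ → ℝ} (hb : IsBid M b)
    (hmin : ∀ b', IsBid M b' → Lpab M v b ≤ Lpab M v b') :
    pos (v M - b M) = (M:ℝ) * b M ∧ b 1 ≤ ∑ j ∈ Finset.Icc 1 M, pos (v j - b 1) := by
  have h1M : (1:ℕ) ∈ Finset.Icc 1 M := Finset.mem_Icc.mpr ⟨le_rfl, hM⟩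
  have hMM : M ∈ Finset.Icc 1 M := Finset.mem_Icc.mpr ⟨hM, le_rfl⟩
  rcases Nat.lt_or_ge (Nnum M v 1) 1 with hN | hN
  · -- degenerate case: all values are zero
    have hcard : ((Finset.Icc 1 M).filter (fun j => beta M v 1 < v j)).card = 0 := by
      have h : Nnum M v 1 = 0 := by omega
      exact h
    have hN0 : (Finset.Icc 1 M).filter (fun j => beta M v 1 < v j) = ∅ :=
      Finset.card_eq_zero.mp hcard
    have hfil : ∀ j ∈ Finset.Icc 1 M, ¬ beta M v 1 < v j := by
      intro j hj h
      have : j ∈ ((Finset.Icc 1 M).filter (fun j => beta M v 1 < v j)) :=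
        Finset.mem_filter.mpr ⟨hj, h⟩
      rw [hN0] at this
      simp at this
    have hphi := phi_beta M v (le_refl 1)
    have hzero : ∑ j ∈ Finset.Icc 1 M, pos (v j - beta M v 1) = 0 :=
      Finset.sum_eq_zero fun j hj =>
        pos_of_nonpos (by have := hfil j hj; push_neg at this; linarith)
    unfold phi at hphi
    rw [hzero] at hphi
    push_cast at hphi
    have hb1 : 0 ≤ beta M v 1 := beta_nonneg M v hM le_rfl hM
    have hSnn : 0 ≤ Sp M v (M - 1) := by
      rw [Sp_eq_sum M v (M-1) (by omega)]
      exact Finset.sum_nonneg fun j hj => by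
        obtain ⟨hj1, hj2⟩ := Finset.mem_Icc.mp hj
        exact beta_nonneg M v hM (by omega) hj2
    have hbeta1 : beta M v 1 = 0 := by linarith
    have hSp0 : Sp M v (M-1) = 0 := by linarith
    have hSpM : Sp M v M = 0 := by
      have h := Sp_succ_eq M v (le_refl 1) hM
      rw [show M - 1 + 1 = M by omega] at h
      rw [h, hSp0, hbeta1]
      ring
    have hvz : ∀ j ∈ Finset.Icc 1 M, v j = 0 := by
      intro j hj
      obtain ⟨hj1, hj2⟩ := Finset.mem_Icc.mp hj
      have hle : v j ≤ beta M v 1 := le_of_not_gt (hfil j hj)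
      have hgev : v M ≤ v j := chain M hv.1 M le_rfl j hj1 hj2
      have := hv.2
      linarith [hbeta1 ▸ hle]
    have hLb : Lpab M v b ≤ 0 := by
      have := hmin (beta M v) (isBid_beta M v hM)
      rwa [Lpab_beta M v hM, hSpM] at this
    have hRM : Rpab M v b M ≤ 0 :=
      (Finset.le_sup' (Rpab M v b) (Finset.mem_Icc.mpr ⟨Nat.zero_le M, le_rfl⟩)).trans hLb
    rw [Rpab_M] at hRM
    have hnn : ∀ j ∈ Finset.Icc 1 M, 0 ≤ b j := fun j hj => by
      obtain ⟨hj1, hj2⟩ := Finset.mem_Icc.mp hj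
      exact bid_nonneg M hb hj1 hj2
    have hsum0 : ∑ j ∈ Finset.Icc 1 M, b j = 0 :=
      le_antisymm hRM (Finset.sum_nonneg hnn)
    have hbz := (Finset.sum_eq_zero_iff_of_nonneg hnn).mp hsum0
    constructor
    · rw [hbz M hMM, hvz M hMM]
      simp [pos_of_nonpos]
    · rw [hbz 1 h1M]
      exact Finset.sum_nonneg fun j _ => pos_nonneg _
  · -- nondegenerate case: all conditional regrets are equal
    have hreq := regret_eq M v hM hN hb hmin
    have hRM := hreq M le_rfl
    rw [Rpab_M] at hRM
    have hRM1 := hreq (M-1) (by omega)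
    rw [Rpab_lt M v b (show M - 1 < M by omega), show M - 1 + 1 = M by omega,
      Finset.Icc_self, Finset.sum_singleton] at hRM1
    have hsplit := Finset.sum_Icc_succ_top (show 1 ≤ M - 1 + 1 by omega) b
    rw [show M - 1 + 1 = M by omega] at hsplit
    have hcast : ((M - 1 : ℕ) : ℝ) = (M:ℝ) - 1 := by
      push_cast [hM]
      ring
    constructor
    · rw [hcast] at hRM1
      rw [hsplit] at hRM
      linarith
    · have hR0 := hreq 0 (Nat.zero_le M)
      rw [Rpab_lt M v b hM] at hR0
      rw [show Finset.Icc 1 0 = ∅ from rfl, Finset.sum_empty] at hR0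
      push_cast at hR0
      have hsingle : b 1 ≤ ∑ j ∈ Finset.Icc 1 M, b j :=
        Finset.single_le_sum (fun j hj => by
          obtain ⟨hj1, hj2⟩ := Finset.mem_Icc.mp hj
          exact bid_nonneg M hb hj1 hj2) h1M
      rw [hRM] at hsingle
      rw [zero_add] at hR0
      linarith

end Aux

/-- the cross-conditional regret minimizing bid in the uniform-price auction
is on average steeper than the unique minimax-loss bid in the pay-as-bid auction; in fact
both auctions give `b_M = v_M/(M+1)`, and `b^LAB_1 ≥ b^PAB_1`. -/
theorem lab_bids_steeper_than_pab_bids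
    (M : ℕ) (hM : 1 ≤ M) (v : ℕ → ℝ) (hv : IsVal M v)
    (bLAB : ℕ → ℝ) (hLABbid : IsBid M bLAB) (hLAB : IsCrossCond M v bLAB)
    (bPAB : ℕ → ℝ) (hPAB : IsMinimaxPAB M v bPAB) :
    (bPAB 1 - bPAB M) / M ≤ (bLAB 1 - bLAB M) / M ∧
    bLAB M = v M / (M + 1) ∧ bPAB M = v M / (M + 1) ∧
    bPAB 1 ≤ bLAB 1 := by
  obtain ⟨hbbid, hmin⟩ := hPAB
  obtain ⟨hkey1, hkey2⟩ := Aux.pab_keys M v hM hv hbbid hmin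
  have hsolve : ∀ t : ℝ, 0 ≤ t → pos (v M - t) = (M:ℝ) * t → t = v M / ((M:ℝ) + 1) := by
    intro t ht h
    have hM1 : (0:ℝ) < (M:ℝ) + 1 := by positivity
    rcases le_or_gt 0 (v M - t) with hc | hc
    · rw [Aux.pos_of_nonneg hc] at h
      field_simp
      linarith
    · rw [Aux.pos_of_nonpos hc.le] at h
      have hMpos : (0:ℝ) < (M:ℝ) := by exact_mod_cast hM
      have ht0 : t = 0 := by nlinarith
      exfalso
      rw [ht0] at hc
      have := hv.2
      linarith
  have hPM : bPAB M = v M / ((M:ℝ) + 1) := hsolve _ hbbid.2 hkey1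
  have hLM : bLAB M = v M / ((M:ℝ) + 1) := by
    have hc := hLAB M (Finset.mem_Icc.mpr ⟨hM, le_rfl⟩)
    rw [Finset.Icc_self, Finset.sum_singleton] at hc
    exact hsolve _ hLABbid.2 hc.symm
  have hc1 := hLAB 1 (Finset.mem_Icc.mpr ⟨le_rfl, hM⟩)
  rw [Nat.cast_one, one_mul] at hc1
  have h1 : bPAB 1 ≤ bLAB 1 := by
    by_contra hlt
    push_neg at hlt
    have hmono : ∑ j ∈ Finset.Icc 1 M, pos (v j - bPAB 1)
        ≤ ∑ j ∈ Finset.Icc 1 M, pos (v j - bLAB 1) :=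
      Finset.sum_le_sum fun j _ => Aux.pos_anti _ hlt.le
    linarith
  refine ⟨?_, hLM, hPM, h1⟩
  rw [hPM, hLM]
  have hMpos : (0:ℝ) < (M:ℝ) := by exact_mod_cast hM
  exact (div_le_div_iff_of_pos_right hMpos).mpr (by linarith)

end
end

section
/- Minimax loss in the multi-unit uniform-price auction is no greater than minimax loss in the multi-unit pay-as-bid auction: min over bid vectors b of L^LAB(b) ≤ min over bid vectors b of L^PAB(b). Moreover, if M ≥ 2 and v_M > 0 then the inequality is strict. -/
noncomputable section

section AuxLemmas

lemma pos_nonneg' (x : ℝ) : 0 ≤ pos x := le_max_right _ _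
lemma le_pos' (x : ℝ) : x ≤ pos x := le_max_left _ _
lemma pos_mono' {x y : ℝ} (h : x ≤ y) : pos x ≤ pos y := max_le_max h le_rfl
lemma pos_of_nonneg' {x : ℝ} (h : 0 ≤ x) : pos x = x := max_eq_left h
lemma pos_pos_iff {x : ℝ} : 0 < pos x ↔ 0 < x := by
  simp [pos, lt_max_iff]
lemma pos_add_le {x η : ℝ} (hη : 0 ≤ η) : pos (x + η) ≤ pos x + η := by
  unfold pos
  apply max_le
  · have := le_max_left x 0; linarith
  · have := le_max_right x 0; linarith

variable {M : ℕ} {v b : ℕ → ℝ}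

lemma bid_anti (hb : IsBid M b) {j k : ℕ} (h1 : 1 ≤ j) (hjk : j ≤ k) (hkM : k ≤ M) :
    b k ≤ b j := by
  have H : ∀ n, j + n ≤ M → b (j + n) ≤ b j := by
    intro n
    induction n with
    | zero => intro _; exact le_rfl
    | succ n ih =>
      intro h
      exact le_trans (hb.1 (j + n) (by omega) (by omega)) (ih (by omega))
  have := H (k - j) (by omega)
  rwa [Nat.add_sub_cancel' hjk] at this

lemma bid_nonneg (hb : IsBid M b) {j : ℕ} (h1 : 1 ≤ j) (hj : j ≤ M) : 0 ≤ b j :=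
  le_trans hb.2 (bid_anti hb h1 hj le_rfl)

lemma val_anti (hv : IsVal M v) {j k : ℕ} (h1 : 1 ≤ j) (hjk : j ≤ k) (hkM : k ≤ M) :
    v k ≤ v j := bid_anti hv h1 hjk hkM

lemma val_nonneg (hv : IsVal M v) {j : ℕ} (h1 : 1 ≤ j) (hj : j ≤ M) : 0 ≤ v j :=
  bid_nonneg hv h1 hj

lemma Rpab_pred {k : ℕ} (hk1 : 1 ≤ k) (hkM : k ≤ M) :
    Rpab M v b (k - 1) =
      (∑ j ∈ Finset.Icc 1 (k - 1), (b j - b k)) + Ulab M v b k := by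
  unfold Rpab Ulab bext
  have h : k - 1 + 1 = k := by omega
  rw [h, if_pos hkM]

lemma Rpab_top : Rpab M v b M = ∑ j ∈ Finset.Icc 1 M, b j := by
  unfold Rpab bext
  have he : Finset.Icc (M + 1) M = ∅ := Finset.Icc_eq_empty (by omega)
  rw [if_neg (show ¬ (M + 1 ≤ M) by omega), he, Finset.sum_empty]
  simp

lemma Rpab_le_Lpab {k : ℕ} (hk : k ≤ M) : Rpab M v b k ≤ Lpab M v b :=
  Finset.le_sup' _ (by simp [Finset.mem_Icc, hk])

lemma Ulab_le_Rpab (hb : IsBid M b) {k : ℕ} (hk1 : 1 ≤ k) (hkM : k ≤ M) :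
    Ulab M v b k ≤ Rpab M v b (k - 1) := by
  rw [Rpab_pred hk1 hkM]
  have h0 : (0:ℝ) ≤ ∑ j ∈ Finset.Icc 1 (k - 1), (b j - b k) := by
    apply Finset.sum_nonneg
    intro j hj
    rw [Finset.mem_Icc] at hj
    have := bid_anti hb (j := j) (k := k) hj.1 (by omega) hkM
    linarith
  linarith

lemma Olab_le_Rpab (hb : IsBid M b) {k : ℕ} (hk1 : 1 ≤ k) (hkM : k ≤ M) :
    Olab b k ≤ Rpab M v b M := by
  rw [Rpab_top]
  have h1 : Olab b k = ∑ _j ∈ Finset.Icc 1 k, b k := by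
    unfold Olab
    rw [Finset.sum_const, Nat.card_Icc, Nat.add_sub_cancel, nsmul_eq_mul]
  rw [h1]
  calc ∑ _j ∈ Finset.Icc 1 k, b k ≤ ∑ j ∈ Finset.Icc 1 k, b j := by
        apply Finset.sum_le_sum
        intro j hj
        rw [Finset.mem_Icc] at hj
        exact bid_anti hb hj.1 hj.2 hkM
    _ ≤ ∑ j ∈ Finset.Icc 1 M, b j := by
        apply Finset.sum_le_sum_of_subset_of_nonneg
          (Finset.Icc_subset_Icc_right hkM)
        intro j hj _
        rw [Finset.mem_Icc] at hj
        exact bid_nonneg hb hj.1 hj.2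

lemma Llab_le_Lpab (hM : 1 ≤ M) (hb : IsBid M b) : Llab M hM v b ≤ Lpab M v b := by
  apply Finset.sup'_le
  intro k hk
  rw [Finset.mem_Icc] at hk
  exact max_le ((Olab_le_Rpab hb hk.1 hk.2).trans (Rpab_le_Lpab le_rfl))
    ((Ulab_le_Rpab hb hk.1 hk.2).trans (Rpab_le_Lpab (by omega)))

lemma Lpab_nonneg (hb : IsBid M b) : 0 ≤ Lpab M v b := by
  have h : (0:ℝ) ≤ Rpab M v b M := by
    rw [Rpab_top]
    exact Finset.sum_nonneg fun j hj => by
      rw [Finset.mem_Icc] at hj; exact bid_nonneg hb hj.1 hj.2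
  exact h.trans (Rpab_le_Lpab le_rfl)

lemma Llab_nonneg (hM : 1 ≤ M) (hb : IsBid M b) : 0 ≤ Llab M hM v b := by
  have h1 : (0:ℝ) ≤ Olab b 1 := by
    have := bid_nonneg hb le_rfl hM
    unfold Olab
    push_cast
    linarith
  have h2 : Olab b 1 ≤ Llab M hM v b := by
    refine le_trans (le_max_left _ (Ulab M v b 1)) ?_
    unfold Llab
    have hmem : (1:ℕ) ∈ Finset.Icc 1 M := by rw [Finset.mem_Icc]; exact ⟨le_rfl, hM⟩
    exact Finset.le_sup' (fun k => max (Olab b k) (Ulab M v b k)) hmem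
  linarith

end AuxLemmas
section MinExists

variable {M : ℕ} {v : ℕ → ℝ}

lemma continuous_finset_sup'' {ι X : Type*} [TopologicalSpace X] (s : Finset ι)
    (hs : s.Nonempty) (f : ι → X → ℝ) (hf : ∀ i, Continuous (f i)) :
    Continuous fun x => s.sup' hs fun i => f i x := by
  induction hs using Finset.Nonempty.cons_induction with
  | singleton a => simpa using hf a
  | cons a s h hs ih =>
    have : (fun x => (Finset.cons a s h).sup' (Finset.cons_nonempty h) fun i => f i x)
        = fun x => max (f a x) (s.sup' hs fun i => f i x) := by
      funext x
      rw [Finset.sup'_cons hs]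
    rw [this]
    exact Continuous.max (hf a) ih

lemma continuous_Rpab (M : ℕ) (v : ℕ → ℝ) (k : ℕ) :
    Continuous fun b : ℕ → ℝ => Rpab M v b k := by
  unfold Rpab bext
  apply Continuous.add
  · apply continuous_finset_sum
    intro j _
    apply Continuous.sub (continuous_apply j)
    by_cases h : k + 1 ≤ M
    · simp only [if_pos h]; exact continuous_apply (k + 1)
    · simp only [if_neg h]; exact continuous_const
  · apply continuous_finset_sum
    intro j _
    unfold pos
    apply Continuous.max _ continuous_const
    apply Continuous.sub continuous_const
    by_cases h : k + 1 ≤ M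
    · simp only [if_pos h]; exact continuous_apply (k + 1)
    · simp only [if_neg h]; exact continuous_const

lemma continuous_Lpab (M : ℕ) (v : ℕ → ℝ) :
    Continuous fun b : ℕ → ℝ => Lpab M v b := by
  unfold Lpab
  exact continuous_finset_sup'' _ _ _ (continuous_Rpab M v)

lemma Lpab_congr {b b' : ℕ → ℝ} (h : ∀ j, 1 ≤ j → j ≤ M → b j = b' j) :
    Lpab M v b = Lpab M v b' := by
  unfold Lpab
  apply Finset.sup'_congr _ rfl
  intro k hk
  rw [Finset.mem_Icc] at hk
  unfold Rpab bext
  have hbe : (if k + 1 ≤ M then b (k+1) else 0) = (if k + 1 ≤ M then b' (k+1) else 0) := by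
    by_cases h1 : k + 1 ≤ M
    · rw [if_pos h1, if_pos h1, h (k+1) (by omega) h1]
    · rw [if_neg h1, if_neg h1]
  rw [hbe]
  congr 1
  apply Finset.sum_congr rfl
  intro j hj
  rw [Finset.mem_Icc] at hj
  rw [h j hj.1 (le_trans hj.2 hk.2)]

lemma exists_min_pab (M : ℕ) (hM : 1 ≤ M) (v : ℕ → ℝ) :
    ∃ bs, IsBid M bs ∧ ∀ b, IsBid M b → Lpab M v bs ≤ Lpab M v b := by
  classical
  set C : ℝ := Lpab M v (fun _ => 0) with hC
  have hC0 : 0 ≤ C := by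
    have h := Rpab_le_Lpab (M := M) (v := v) (b := fun _ => 0) (k := M) le_rfl
    rw [Rpab_top] at h
    simpa using h
  set S : Set (ℕ → ℝ) :=
    (Set.univ.pi fun i => if 1 ≤ i ∧ i ≤ M then Set.Icc (0:ℝ) C else {0}) ∩
      {b | ∀ k, 1 ≤ k → k < M → b (k + 1) ≤ b k} with hS
  have hcomp : IsCompact S := by
    apply IsCompact.inter_right
    · apply isCompact_univ_pi
      intro i
      by_cases h : 1 ≤ i ∧ i ≤ M
      · rw [if_pos h]; exact isCompact_Icc
      · rw [if_neg h]; exact isCompact_singleton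
    · have : {b : ℕ → ℝ | ∀ k, 1 ≤ k → k < M → b (k + 1) ≤ b k}
          = ⋂ k, {b : ℕ → ℝ | 1 ≤ k → k < M → b (k + 1) ≤ b k} := by
        ext x; simp [Set.mem_iInter]
      rw [this]
      apply isClosed_iInter
      intro k
      by_cases h : 1 ≤ k ∧ k < M
      · have : {b : ℕ → ℝ | 1 ≤ k → k < M → b (k + 1) ≤ b k}
            = {b : ℕ → ℝ | b (k + 1) ≤ b k} := by
          ext x; simp [h.1, h.2]
        rw [this]
        exact isClosed_le (continuous_apply (k+1)) (continuous_apply k)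
      · have : {b : ℕ → ℝ | 1 ≤ k → k < M → b (k + 1) ≤ b k} = Set.univ := by
          ext x; simp only [Set.mem_setOf_eq, Set.mem_univ, iff_true]
          intro h1 h2; exact absurd ⟨h1, h2⟩ h
        rw [this]
        exact isClosed_univ
  have hzero : (fun _ : ℕ => (0:ℝ)) ∈ S := by
    constructor
    · intro i _
      by_cases h : 1 ≤ i ∧ i ≤ M
      · simp only [if_pos h]; exact Set.mem_Icc.mpr ⟨le_rfl, hC0⟩
      · simp only [if_neg h]; rfl
    · intro k _ _; exact le_rfl
  obtain ⟨bs, hbsS, hbsmin⟩ := hcomp.exists_isMinOn ⟨_, hzero⟩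
    ((continuous_Lpab M v).continuousOn)
  have hbsBid : IsBid M bs := by
    constructor
    · exact hbsS.2
    · have h3 : bs M ∈ (if 1 ≤ M ∧ M ≤ M then Set.Icc (0:ℝ) C else {0}) :=
        hbsS.1 M (Set.mem_univ M)
      rw [if_pos (show 1 ≤ M ∧ M ≤ M from ⟨hM, le_rfl⟩)] at h3
      exact h3.1
  refine ⟨bs, hbsBid, ?_⟩
  intro b hb
  by_cases hb1 : b 1 ≤ C
  · set bt : ℕ → ℝ := fun j => if 1 ≤ j ∧ j ≤ M then b j else 0 with hbt
    have hbtS : bt ∈ S := by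
      constructor
      · intro i _
        by_cases h : 1 ≤ i ∧ i ≤ M
        · simp only [if_pos h, hbt]
          exact Set.mem_Icc.mpr ⟨bid_nonneg hb h.1 h.2,
            le_trans (bid_anti hb le_rfl h.1 h.2) hb1⟩
        · simp only [if_neg h, hbt]; rfl
      · intro k hk1 hkM
        simp only [hbt]
        rw [if_pos (show 1 ≤ k + 1 ∧ k + 1 ≤ M by omega),
          if_pos (show 1 ≤ k ∧ k ≤ M by omega)]
        exact hb.1 k hk1 hkM
    have heq : Lpab M v bt = Lpab M v b := by
      apply Lpab_congr
      intro j h1 h2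
      simp only [hbt]
      rw [if_pos (show 1 ≤ j ∧ j ≤ M from ⟨h1, h2⟩)]
    calc Lpab M v bs ≤ Lpab M v bt := hbsmin hbtS
      _ = Lpab M v b := heq
  · push_neg at hb1
    have h1 : b 1 ≤ Lpab M v b := by
      refine le_trans ?_ (Rpab_le_Lpab (k := M) le_rfl)
      rw [Rpab_top]
      apply Finset.single_le_sum (f := fun j => b j)
      · intro j hj
        rw [Finset.mem_Icc] at hj
        exact bid_nonneg hb hj.1 hj.2
      · rw [Finset.mem_Icc]; exact ⟨le_rfl, hM⟩
    have h2 : Lpab M v bs ≤ C := hbsmin hzero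
    linarith

end MinExists
section StrictCore

variable {M : ℕ} {v b : ℕ → ℝ}

lemma sum_split (f : ℕ → ℝ) {k M : ℕ} (hk : k ≤ M) :
    ∑ j ∈ Finset.Icc 1 M, f j
      = (∑ j ∈ Finset.Icc 1 k, f j) + ∑ j ∈ Finset.Icc (k + 1) M, f j := by
  have e1 : Finset.Icc 1 M = Finset.Ioc 0 M := by
    ext x; simp [Finset.mem_Icc, Finset.mem_Ioc]; omega
  have e2 : Finset.Icc 1 k = Finset.Ioc 0 k := by
    ext x; simp [Finset.mem_Icc, Finset.mem_Ioc]; omega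
  have e3 : Finset.Icc (k + 1) M = Finset.Ioc k M := by
    ext x; simp [Finset.mem_Icc, Finset.mem_Ioc]
  rw [e1, e2, e3, Finset.sum_Ioc_consecutive _ (Nat.zero_le k) hk]

lemma sum_split_top (f : ℕ → ℝ) {M : ℕ} (hM : 1 ≤ M) :
    ∑ j ∈ Finset.Icc 1 M, f j = (∑ j ∈ Finset.Icc 1 (M - 1), f j) + f M := by
  have h := sum_split f (k := M - 1) (M := M) (by omega)
  rw [show M - 1 + 1 = M by omega] at h
  rw [h, Finset.Icc_self, Finset.sum_singleton]

lemma sum_split_bot (f : ℕ → ℝ) {M : ℕ} (hM : 1 ≤ M) :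
    ∑ j ∈ Finset.Icc 1 M, f j = f 1 + ∑ j ∈ Finset.Icc 2 M, f j := by
  have h := sum_split f (k := 1) (M := M) hM
  rw [h, Finset.Icc_self, Finset.sum_singleton]

lemma sum_pos_shift_lt (s : Finset ℕ) (w : ℕ → ℝ) {c c' L : ℝ} (hcc : c < c')
    (hL0 : 0 < L) (h : ∑ j ∈ s, pos (w j - c) ≤ L) :
    ∑ j ∈ s, pos (w j - c') < L := by
  have hterm : ∀ j ∈ s, pos (w j - c') ≤ pos (w j - c) := fun j _ =>
    pos_mono' (by linarith)
  rcases eq_or_lt_of_le h with he | hl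
  · have hex : ∃ j ∈ s, 0 < pos (w j - c) := by
      by_contra hc
      push_neg at hc
      have h0 : ∑ j ∈ s, pos (w j - c) ≤ 0 := Finset.sum_nonpos hc
      rw [he] at h0
      linarith
    obtain ⟨j, hjs, hj⟩ := hex
    have hlt2 : pos (w j - c') < pos (w j - c) := by
      have hx : 0 < w j - c := pos_pos_iff.mp hj
      rw [pos_of_nonneg' hx.le]
      exact max_lt (by linarith) (by linarith)
    calc ∑ j ∈ s, pos (w j - c') < ∑ j ∈ s, pos (w j - c) :=
          Finset.sum_lt_sum hterm ⟨j, hjs, hlt2⟩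
      _ = L := he
  · calc ∑ j ∈ s, pos (w j - c') ≤ ∑ j ∈ s, pos (w j - c) := Finset.sum_le_sum hterm
      _ < L := hl

lemma Llab_lt (hM : 1 ≤ M) {L : ℝ}
    (h : ∀ k, 1 ≤ k → k ≤ M → max (Olab b k) (Ulab M v b k) < L) :
    Llab M hM v b < L := by
  unfold Llab
  rw [Finset.sup'_lt_iff]
  intro k hk
  rw [Finset.mem_Icc] at hk
  exact h k hk.1 hk.2

/-- If some overbidding regret is tight then the bid vector is constant on `[1,M]`. -/
lemma tightO (hb : IsBid M b) (hvM : 0 < v M) {L : ℝ}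
    (hR : ∀ k, k ≤ M → Rpab M v b k ≤ L) {k : ℕ} (hk1 : 1 ≤ k) (hkM : k ≤ M)
    (ht : Olab b k = L) : ∀ j, 1 ≤ j → j ≤ M → b j = b 1 := by
  have hM : 1 ≤ M := le_trans hk1 hkM
  have hSle : ∑ j ∈ Finset.Icc 1 M, b j ≤ L := by
    rw [← Rpab_top (v := v)]; exact hR M le_rfl
  have hsplit := sum_split b hkM
  have hnn2 : (0:ℝ) ≤ ∑ j ∈ Finset.Icc (k + 1) M, b j :=
    Finset.sum_nonneg fun j hj => by
      rw [Finset.mem_Icc] at hj; exact bid_nonneg hb (by omega) hj.2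
  have hlow : (k:ℝ) * b k ≤ ∑ j ∈ Finset.Icc 1 k, b j := by
    have hc : (∑ _j ∈ Finset.Icc 1 k, b k) = (k:ℝ) * b k := by
      rw [Finset.sum_const, Nat.card_Icc, Nat.add_sub_cancel, nsmul_eq_mul]
    rw [← hc]
    exact Finset.sum_le_sum fun j hj => by
      rw [Finset.mem_Icc] at hj; exact bid_anti hb hj.1 hj.2 hkM
  have hOk : (k:ℝ) * b k = L := ht
  have h1 : ∑ j ∈ Finset.Icc 1 k, b j = (k:ℝ) * b k := by linarith
  have hconst1 : ∀ j ∈ Finset.Icc 1 k, b k = b j := by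
    have hle : ∀ j ∈ Finset.Icc 1 k, b k ≤ b j := fun j hj => by
      rw [Finset.mem_Icc] at hj; exact bid_anti hb hj.1 hj.2 hkM
    have heq : (∑ j ∈ Finset.Icc 1 k, b k) = ∑ j ∈ Finset.Icc 1 k, b j := by
      rw [Finset.sum_const, Nat.card_Icc, Nat.add_sub_cancel, nsmul_eq_mul, h1]
    exact (Finset.sum_eq_sum_iff_of_le hle).mp heq
  have hzero : ∀ j ∈ Finset.Icc (k + 1) M, b j = 0 := by
    have hz : ∑ j ∈ Finset.Icc (k + 1) M, b j = 0 := by linarith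
    exact (Finset.sum_eq_zero_iff_of_nonneg fun j hj => by
      rw [Finset.mem_Icc] at hj; exact bid_nonneg hb (by omega) hj.2).mp hz
  have hkeq : k = M := by
    by_contra hne
    have hkM' : k < M := lt_of_le_of_ne hkM hne
    have hbM : b M = 0 := hzero M (by rw [Finset.mem_Icc]; omega)
    have hRM1 : Rpab M v b (M - 1) = L + v M := by
      rw [Rpab_pred hM le_rfl]
      have hU : Ulab M v b M = v M := by
        unfold Ulab
        rw [Finset.Icc_self, Finset.sum_singleton, hbM, sub_zero,
          pos_of_nonneg' hvM.le]
      rw [hU]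
      have hsum : ∑ j ∈ Finset.Icc 1 (M - 1), (b j - b M)
          = ∑ j ∈ Finset.Icc 1 M, b j := by
        rw [hbM]
        simp only [sub_zero]
        rw [sum_split_top b hM, hbM, add_zero]
      rw [hsum]
      have hSeq : ∑ j ∈ Finset.Icc 1 M, b j = L := by linarith
      rw [hSeq]
    have := hR (M - 1) (by omega)
    rw [hRM1] at this
    linarith
  subst hkeq
  intro j h1j h2j
  have ha := hconst1 j (by rw [Finset.mem_Icc]; exact ⟨h1j, h2j⟩)
  have hb1 := hconst1 1 (by rw [Finset.mem_Icc]; exact ⟨le_rfl, hM⟩)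
  rw [← ha, hb1]

/-- If some underbidding regret is tight then the bids above it are constant. -/
lemma tightU (hb : IsBid M b) {L : ℝ}
    (hR : ∀ k, k ≤ M → Rpab M v b k ≤ L) {k : ℕ} (hk1 : 1 ≤ k) (hkM : k ≤ M)
    (ht : Ulab M v b k = L) : ∀ j, 1 ≤ j → j ≤ k → b j = b k := by
  have hRk := hR (k - 1) (by omega)
  rw [Rpab_pred hk1 hkM, ht] at hRk
  have hsum : ∑ j ∈ Finset.Icc 1 (k - 1), (b j - b k) ≤ 0 := by linarith
  have hz : ∀ j ∈ Finset.Icc 1 (k - 1), b j - b k = 0 := by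
    apply (Finset.sum_eq_zero_iff_of_nonneg fun j hj => by
      rw [Finset.mem_Icc] at hj
      have := bid_anti hb hj.1 (by omega) hkM
      linarith).mp
    have h0 : (0:ℝ) ≤ ∑ j ∈ Finset.Icc 1 (k - 1), (b j - b k) :=
      Finset.sum_nonneg fun j hj => by
        rw [Finset.mem_Icc] at hj
        have := bid_anti hb hj.1 (by omega) hkM
        linarith
    linarith
  intro j h1j h2j
  rcases eq_or_lt_of_le h2j with he | hl
  · rw [he]
  · have := hz j (by rw [Finset.mem_Icc]; omega)
    linarith

end StrictCore
section StrictMain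

lemma exists_strict (M : ℕ) (hM : 1 ≤ M) (hM2 : 2 ≤ M) (v : ℕ → ℝ) (hv : IsVal M v)
    (hvM : 0 < v M) (b : ℕ → ℝ) (hb : IsBid M b) :
    ∃ b', IsBid M b' ∧ Llab M hM v b' < Lpab M v b := by
  classical
  set L := Lpab M v b with hLdef
  have hR : ∀ k, k ≤ M → Rpab M v b k ≤ L := fun k hk => Rpab_le_Lpab hk
  have hO : ∀ k, 1 ≤ k → k ≤ M → Olab b k ≤ L := fun k h1 h2 =>
    (Olab_le_Rpab hb h1 h2).trans (hR M le_rfl)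
  have hU : ∀ k, 1 ≤ k → k ≤ M → Ulab M v b k ≤ L := fun k h1 h2 =>
    (Ulab_le_Rpab hb h1 h2).trans (hR (k - 1) (by omega))
  have hUM : Ulab M v b M = pos (v M - b M) := by
    unfold Ulab; rw [Finset.Icc_self, Finset.sum_singleton]
  have hL0 : 0 < L := by
    have h1 : pos (v M - b M) ≤ L := hUM ▸ hU M hM le_rfl
    have h2 : (M:ℝ) * b M ≤ L := hO M hM le_rfl
    have hbM : 0 ≤ b M := hb.2
    rcases le_or_gt (v M) (b M) with h | h
    · have hM' : (1:ℝ) ≤ (M:ℝ) := by exact_mod_cast hM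
      nlinarith
    · have := le_pos' (v M - b M)
      linarith
  by_cases hconst : ∀ j, 1 ≤ j → j ≤ M → b j = b 1
  · -- Scenario A : constant bid
    set t := b 1 with htdef
    have ht0 : 0 ≤ t := by
      have := hb.2; rwa [hconst M hM le_rfl] at this
    rcases eq_or_lt_of_le ht0 with ht | ht
    · -- A1 : t = 0
      set V := ∑ j ∈ Finset.Icc 1 M, v j with hVdef
      have hVL : V ≤ L := by
        have h0 := hR 0 (Nat.zero_le M)
        have he : Rpab M v b 0 = V := by
          unfold Rpab bext
          rw [Finset.Icc_eq_empty (by omega), Finset.sum_empty, zero_add,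
            if_pos hM]
          rw [← htdef, ← ht]
          apply Finset.sum_congr rfl
          intro j hj
          rw [Finset.mem_Icc] at hj
          rw [sub_zero, pos_of_nonneg' (val_nonneg hv hj.1 hj.2)]
        rwa [he] at h0
      have hV0 : 0 < V := by
        have := Finset.single_le_sum (f := fun j => v j)
          (fun j hj => by rw [Finset.mem_Icc] at hj; exact val_nonneg hv hj.1 hj.2)
          (by rw [Finset.mem_Icc]; exact ⟨hM, le_rfl⟩)
        have h2 : v M ≤ V := this
        linarith
      set s := min (v M) (V / (2 * M)) with hsdef
      have hM0 : (0:ℝ) < (M:ℝ) := by exact_mod_cast hM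
      have hs0 : 0 < s := lt_min hvM (by positivity)
      have hsvM : s ≤ v M := min_le_left _ _
      have hsV : s ≤ V / (2 * M) := min_le_right _ _
      refine ⟨fun _ => s, ⟨fun k _ _ => le_rfl, hs0.le⟩, ?_⟩
      apply Llab_lt
      intro k h1 h2
      have hkM' : (k:ℝ) ≤ (M:ℝ) := by exact_mod_cast h2
      apply max_lt
      · unfold Olab
        have : (k:ℝ) * s ≤ (M:ℝ) * s := mul_le_mul_of_nonneg_right hkM' hs0.le
        have h3 : (M:ℝ) * (V / (2 * M)) = V / 2 := by field_simp
        have h4 : (M:ℝ) * s ≤ V / 2 := by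
          calc (M:ℝ) * s ≤ (M:ℝ) * (V / (2 * M)) :=
                mul_le_mul_of_nonneg_left hsV hM0.le
            _ = V / 2 := h3
        linarith
      · unfold Ulab
        have hsub : ∑ j ∈ Finset.Icc k M, pos (v j - s)
            ≤ ∑ j ∈ Finset.Icc 1 M, pos (v j - s) := by
          apply Finset.sum_le_sum_of_subset_of_nonneg
          · apply Finset.Icc_subset_Icc_left h1
          · intro j _ _; exact pos_nonneg' _
        have heq : ∑ j ∈ Finset.Icc 1 M, pos (v j - s)
            = V - (M:ℝ) * s := by
          have : ∀ j ∈ Finset.Icc 1 M, pos (v j - s) = v j - s := by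
            intro j hj
            rw [Finset.mem_Icc] at hj
            apply pos_of_nonneg'
            have := val_anti hv hj.1 (le_refl j) hj.2  -- dummy
            have hvj : v M ≤ v j := val_anti hv hj.1 hj.2 le_rfl
            linarith
          rw [Finset.sum_congr rfl this, Finset.sum_sub_distrib,
            Finset.sum_const, Nat.card_Icc, Nat.add_sub_cancel, nsmul_eq_mul,
            hVdef]
        have : (0:ℝ) < (M:ℝ) * s := by positivity
        calc ∑ j ∈ Finset.Icc k M, pos (v j - s)
            ≤ V - (M:ℝ) * s := by rw [← heq]; exact hsub
          _ < V := by linarith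
          _ ≤ L := hVL
    · -- A2 : t > 0
      have hbj : ∀ j, 1 ≤ j → j ≤ M → b j = t := hconst
      have hMt : (M:ℝ) * t ≤ L := by
        have := hO M hM le_rfl
        unfold Olab at this
        rwa [hbj M hM le_rfl] at this
      have hM2' : (2:ℝ) ≤ (M:ℝ) := by exact_mod_cast hM2
      -- all U's for k ≥ 2 are strictly below L
      have claimU2 : ∀ k, 2 ≤ k → k ≤ M → Ulab M v b k < L := by
        intro k h2 hk
        have hbk : b k = t := hbj k (by omega) hk
        by_cases hv1 : v 1 ≤ t
        · have hz : Ulab M v b k = 0 := by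
            unfold Ulab
            apply Finset.sum_eq_zero
            intro j hj
            rw [Finset.mem_Icc] at hj
            have hvj : v j ≤ v 1 := val_anti hv le_rfl (by omega) hj.2
            rw [hbk]
            unfold pos
            apply max_eq_right
            linarith
          rw [hz]; exact hL0
        · push_neg at hv1
          have hU1 : Ulab M v b 1 = pos (v 1 - b 1)
              + ∑ j ∈ Finset.Icc 2 M, pos (v j - b 1) := by
            unfold Ulab
            exact sum_split_bot _ hM
          have hsub : Ulab M v b k ≤ ∑ j ∈ Finset.Icc 2 M, pos (v j - b 1) := by
            unfold Ulab
            rw [hbk, htdef]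
            apply Finset.sum_le_sum_of_subset_of_nonneg
            · apply Finset.Icc_subset_Icc_left h2
            · intro j _ _; exact pos_nonneg' _
          have hpos1 : 0 < pos (v 1 - b 1) := by
            rw [pos_pos_iff, ← htdef]; linarith
          have := hU 1 le_rfl hM
          linarith
      have hIcc2ne : (Finset.Icc 2 M).Nonempty := Finset.nonempty_Icc.mpr hM2
      set U2 := (Finset.Icc 2 M).sup' hIcc2ne (Ulab M v b) with hU2def
      have hU2lt : U2 < L := by
        rw [hU2def, Finset.sup'_lt_iff]
        intro k hk
        rw [Finset.mem_Icc] at hk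
        exact claimU2 k hk.1 hk.2
      set η := min (t / 2) ((L - U2) / 2) with hηdef
      have hη0 : 0 < η := lt_min (by linarith) (by linarith)
      have hηt : η ≤ t / 2 := min_le_left _ _
      have hηU : η ≤ (L - U2) / 2 := min_le_right _ _
      set b' : ℕ → ℝ := fun j => if j = 1 then t + η else if j = M then t - η else t
        with hb'def
      have hb'1 : b' 1 = t + η := by simp [hb'def]
      have hb'M : b' M = t - η := by
        simp only [hb'def]
        rw [if_neg (show ¬ (M = 1) by omega)]
        simp
      have hb'mid : ∀ j, j ≠ 1 → j ≠ M → b' j = t := by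
        intro j hj1 hjM
        simp only [hb'def]
        rw [if_neg hj1, if_neg hjM]
      have hb'bid : IsBid M b' := by
        constructor
        · intro k hk1 hkM
          have hup : b' (k + 1) ≤ t := by
            by_cases h : k + 1 = M
            · rw [h, hb'M]; linarith
            · rw [hb'mid (k + 1) (by omega) h]
          have hdn : t ≤ b' k := by
            by_cases hk : k = 1
            · rw [hk, hb'1]; linarith
            · rw [hb'mid k hk (by omega)]
          linarith
        · rw [hb'M]; linarith
      refine ⟨b', hb'bid, ?_⟩
      apply Llab_lt
      intro k h1 h2
      apply max_lt
      · -- overbidding part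
        unfold Olab
        by_cases hk : k = 1
        · rw [hk, hb'1]
          push_cast
          have h2t : 2 * t ≤ (M:ℝ) * t := mul_le_mul_of_nonneg_right hM2' ht.le
          linarith
        · by_cases hkM : k = M
          · rw [hkM, hb'M]
            have hMη : 0 < (M:ℝ) * η := mul_pos (by linarith) hη0
            have he : (M:ℝ) * (t - η) = (M:ℝ) * t - (M:ℝ) * η := by ring
            rw [he]
            linarith
          · rw [hb'mid k hk hkM]
            have hk1' : (k:ℝ) + 1 ≤ (M:ℝ) := by
              exact_mod_cast (show k + 1 ≤ M by omega)
            have : (k:ℝ) * t ≤ ((M:ℝ) - 1) * t :=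
              mul_le_mul_of_nonneg_right (by linarith) ht.le
            nlinarith
      · -- underbidding part
        unfold Ulab
        by_cases hk : k = 1
        · rw [hk, hb'1]
          apply sum_pos_shift_lt _ _ (by linarith : t < t + η) hL0
          have h9 := hU 1 le_rfl hM
          unfold Ulab at h9
          rwa [← htdef] at h9
        · by_cases hkM : k = M
          · rw [hkM, hb'M, Finset.Icc_self, Finset.sum_singleton]
            have hUMval : pos (v M - t) ≤ U2 := by
              have hle := Finset.le_sup' (Ulab M v b)
                (by rw [Finset.mem_Icc]; exact ⟨hM2, le_rfl⟩ :
                  M ∈ Finset.Icc 2 M)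
              rw [hUM, hbj M hM le_rfl] at hle
              exact hle
            have hshift : pos (v M - (t - η)) ≤ pos (v M - t) + η := by
              have : v M - (t - η) = (v M - t) + η := by ring
              rw [this]
              exact pos_add_le hη0.le
            linarith
          · rw [hb'mid k hk hkM]
            have hle : Ulab M v b k ≤ U2 := by
              apply Finset.le_sup'
              rw [Finset.mem_Icc]
              exact ⟨by omega, h2⟩
            have hbk : b k = t := hbj k h1 h2
            unfold Ulab at hle
            rw [hbk] at hle
            linarith
  · -- Scenario B : non-constant bid
    push_neg at hconst
    obtain ⟨j₀, hj₀1, hj₀M, hj₀⟩ := hconst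
    have hOst : ∀ k, 1 ≤ k → k ≤ M → Olab b k < L := by
      intro k h1 h2
      rcases lt_or_eq_of_le (hO k h1 h2) with h | h
      · exact h
      · exact absurd (tightO hb hvM hR h1 h2 h j₀ hj₀1 hj₀M) hj₀
    set F := (Finset.Icc 1 M).filter (fun k => b 1 ≤ b k) with hF
    have hFne : F.Nonempty := ⟨1, by
      rw [hF, Finset.mem_filter, Finset.mem_Icc]
      exact ⟨⟨le_rfl, hM⟩, le_rfl⟩⟩
    set K := F.max' hFne with hK
    obtain ⟨hKIcc, hKge⟩ := Finset.mem_filter.mp (F.max'_mem hFne)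
    rw [Finset.mem_Icc] at hKIcc
    have hK1 : 1 ≤ K := hKIcc.1
    have hKM : K ≤ M := hKIcc.2
    have hbK : b K = b 1 := le_antisymm (bid_anti hb le_rfl hK1 hKM) hKge
    have hble : ∀ k, 1 ≤ k → k ≤ K → b k = b 1 := fun k h1 h2 =>
      le_antisymm (bid_anti hb le_rfl h1 (h2.trans hKM))
        (hbK ▸ bid_anti hb h1 h2 hKM)
    have hKlt : K < M := by
      rcases lt_or_eq_of_le hKM with h | h
      · exact h
      · exact absurd (hble j₀ hj₀1 (h ▸ hj₀M)) hj₀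
    have hgt : ∀ k, K < k → k ≤ M → b k < b 1 := by
      intro k hk hkM'
      by_contra hcon
      push_neg at hcon
      have hmem : k ∈ F := by
        rw [hF, Finset.mem_filter, Finset.mem_Icc]
        exact ⟨⟨by omega, hkM'⟩, hcon⟩
      have := F.le_max' k hmem
      omega
    have hUst : ∀ k, K < k → k ≤ M → Ulab M v b k < L := by
      intro k hk h2
      rcases lt_or_eq_of_le (hU k (by omega) h2) with h | h
      · exact h
      · exfalso
        have h3 := tightU hb hR (by omega : 1 ≤ k) h2 h 1 le_rfl (by omega)
        have := hgt k hk h2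
        linarith
    have hIccne : (Finset.Icc 1 M).Nonempty := Finset.nonempty_Icc.mpr hM
    set G := (Finset.Icc 1 M).sup' hIccne (Olab b) with hGdef
    have hGlt : G < L := by
      rw [hGdef, Finset.sup'_lt_iff]
      intro k hk
      rw [Finset.mem_Icc] at hk
      exact hOst k hk.1 hk.2
    have hM0 : (0:ℝ) < (M:ℝ) := by exact_mod_cast hM
    set η := (L - G) / (2 * M) with hηdef
    have hη0 : 0 < η := by
      apply div_pos (by linarith) (by linarith)
    set b' : ℕ → ℝ := fun j => if j ≤ K then b j + η else b j with hb'def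
    have hb'le : ∀ j, j ≤ K → b' j = b j + η := by
      intro j hj; simp only [hb'def]; rw [if_pos hj]
    have hb'gt : ∀ j, K < j → b' j = b j := by
      intro j hj; simp only [hb'def]; rw [if_neg (by omega)]
    have hb'bid : IsBid M b' := by
      constructor
      · intro k hk1 hkM'
        by_cases hk : k + 1 ≤ K
        · rw [hb'le (k+1) hk, hb'le k (by omega)]
          have := hb.1 k hk1 hkM'
          linarith
        · by_cases hk2 : k ≤ K
          · rw [hb'gt (k+1) (by omega), hb'le k hk2]
            have := hb.1 k hk1 hkM'
            linarith
          · rw [hb'gt (k+1) (by omega), hb'gt k (by omega)]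
            exact hb.1 k hk1 hkM'
      · rw [hb'gt M hKlt]
        exact hb.2
    refine ⟨b', hb'bid, ?_⟩
    apply Llab_lt
    intro k h1 h2
    apply max_lt
    · unfold Olab
      by_cases hk : k ≤ K
      · rw [hb'le k hk]
        have h3 : (k:ℝ) * b k ≤ G := by
          have := Finset.le_sup' (Olab b)
            (by rw [Finset.mem_Icc]; exact ⟨h1, h2⟩ : k ∈ Finset.Icc 1 M)
          rw [← hGdef] at this
          exact this
        have hk' : (k:ℝ) ≤ (M:ℝ) := by exact_mod_cast h2
        have h4 : (k:ℝ) * η ≤ (M:ℝ) * η := mul_le_mul_of_nonneg_right hk' hη0.le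
        have h5 : (M:ℝ) * η = (L - G) / 2 := by
          rw [hηdef]; field_simp
        have h6 : (k:ℝ) * (b k + η) = (k:ℝ) * b k + (k:ℝ) * η := by ring
        rw [h6]
        linarith
      · rw [hb'gt k (by omega)]
        exact hOst k h1 h2
    · unfold Ulab
      by_cases hk : k ≤ K
      · rw [hb'le k hk]
        apply sum_pos_shift_lt _ _ (by linarith : b k < b k + η) hL0
        exact hU k h1 h2
      · rw [hb'gt k (by omega)]
        exact hUst k (by omega) h2

end StrictMain

/-- minimax loss in the multi-unit uniform-price auction is no greater than
minimax loss in the multi-unit pay-as-bid auction; strictly lower if `M ≥ 2` and `v_M > 0`. -/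
theorem minimax_loss_lab_le_pab
    (M : ℕ) (hM : 1 ≤ M) (v : ℕ → ℝ) (hv : IsVal M v) :
    sInf {L : ℝ | ∃ b, IsBid M b ∧ L = Llab M hM v b} ≤
      sInf {L : ℝ | ∃ b, IsBid M b ∧ L = Lpab M v b} ∧
    (2 ≤ M → 0 < v M →
      sInf {L : ℝ | ∃ b, IsBid M b ∧ L = Llab M hM v b} <
        sInf {L : ℝ | ∃ b, IsBid M b ∧ L = Lpab M v b}) := by
  classical
  set Sl : Set ℝ := {L : ℝ | ∃ b, IsBid M b ∧ L = Llab M hM v b} with hSl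
  set Sp : Set ℝ := {L : ℝ | ∃ b, IsBid M b ∧ L = Lpab M v b} with hSp
  have hzeroBid : IsBid M (fun _ => (0:ℝ)) := ⟨fun _ _ _ => le_rfl, le_rfl⟩
  have hSlne : Sl.Nonempty := ⟨_, ⟨_, hzeroBid, rfl⟩⟩
  have hSpne : Sp.Nonempty := ⟨_, ⟨_, hzeroBid, rfl⟩⟩
  have hSlbdd : BddBelow Sl := by
    refine ⟨0, ?_⟩
    rintro x ⟨b, hb, rfl⟩
    exact Llab_nonneg hM hb
  have hSpbdd : BddBelow Sp := by
    refine ⟨0, ?_⟩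
    rintro x ⟨b, hb, rfl⟩
    exact Lpab_nonneg hb
  have h1 : sInf Sl ≤ sInf Sp := by
    apply le_csInf hSpne
    rintro x ⟨b, hb, rfl⟩
    exact le_trans (csInf_le hSlbdd ⟨b, hb, rfl⟩) (Llab_le_Lpab hM hb)
  refine ⟨h1, ?_⟩
  intro hM2 hvM
  obtain ⟨bs, hbs, hmin⟩ := exists_min_pab M hM v
  obtain ⟨b', hb', hlt⟩ := exists_strict M hM hM2 v hv hvM bs hbs
  have hSpInf : sInf Sp = Lpab M v bs := by
    apply le_antisymm
    · exact csInf_le hSpbdd ⟨bs, hbs, rfl⟩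
    · apply le_csInf hSpne
      rintro x ⟨b, hb, rfl⟩
      exact hmin b hb
  calc sInf Sl ≤ Llab M hM v b' := csInf_le hSlbdd ⟨b', hb', rfl⟩
    _ < Lpab M v bs := hlt
    _ = sInf Sp := hSpInf.symm

end
end

section
/- Let integers M_b ≥ 1 and M_q ≥ 1 be given. Suppose (q,b) is a minimax-loss M_b-point bid in the constrained pay-as-bid auction (minimizing L^PAB over all M_b-point bids), and let L* be the minimum of L^PAB over M_b-point bids whose quantity points all lie on the grid {0, Q/M_q, 2Q/M_q, …, Q}. Define (q',b') by q'_k = ⌊M_q·q_k/Q⌋·(Q/M_q) and b'_k = b_k for all k. Then (q',b') is an M_b-point bid with all quantity points on the grid, and L* ≤ L^PAB(q',b') ≤ L* + ∫_0^{Q/M_q} v(x) dx. -/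
open MeasureTheory intervalIntegral

noncomputable section

/-- An `M`-point bid `(q,b)`: `0 = q_0 ≤ q_1 ≤ … ≤ q_M ≤ Q` and `b_1 ≥ … ≥ b_M ≥ 0`. -/
def IsBidPts (Q : ℝ) (M : ℕ) (q b : ℕ → ℝ) : Prop :=
  q 0 = 0 ∧ (∀ k, k < M → q k ≤ q (k + 1)) ∧ q M ≤ Q ∧
    (∀ k, 1 ≤ k → k < M → b (k + 1) ≤ b k) ∧ 0 ≤ b M

/-- The step bid function induced by the `M`-point bid `(q,b)`:
`b̂(x) = b_k` for `q_{k−1} ≤ x < q_k` and `b̂(x) = 0` for `x ≥ q_M`. -/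
def bhat (M : ℕ) (q b : ℕ → ℝ) (x : ℝ) : ℝ :=
  ∑ k ∈ Finset.Icc 1 M, if q (k - 1) ≤ x ∧ x < q k then b k else 0

/-- Conditional regret at quantity `t` in the bidpoint-constrained pay-as-bid auction:
`R^PAB_t(q,b) = ∫_0^t (b̂(x) − b̂(t)) dx + ∫_t^Q (v(x) − b̂(t))₊ dx`. -/
def Rcpab (Q : ℝ) (M : ℕ) (v : ℝ → ℝ) (q b : ℕ → ℝ) (t : ℝ) : ℝ :=
  (∫ x in (0:ℝ)..t, (bhat M q b x - bhat M q b t))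
    + ∫ x in t..Q, pos (v x - bhat M q b t)

/-- Loss in the bidpoint-constrained pay-as-bid auction:
`L^PAB(q,b) = sup_{t ∈ [0,Q]} R^PAB_t(q,b)`. -/
def Lcpab (Q : ℝ) (M : ℕ) (v : ℝ → ℝ) (q b : ℕ → ℝ) : ℝ :=
  sSup {r : ℝ | ∃ t ∈ Set.Icc (0:ℝ) Q, r = Rcpab Q M v q b t}

/-- A minimax-loss `M`-point bid in the constrained pay-as-bid auction. -/
def IsMinimaxCPAB (Q : ℝ) (M : ℕ) (v : ℝ → ℝ) (q b : ℕ → ℝ) : Prop :=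
  IsBidPts Q M q b ∧ ∀ q' b', IsBidPts Q M q' b' → Lcpab Q M v q b ≤ Lcpab Q M v q' b'

/-- Loss in the bidpoint-constrained uniform-price auction:
`L^LAB(q,b) = max( max_{1≤k≤M} max( q_k·b_k , ∫_{q_{k−1}}^Q (v(x) − b_k)₊ dx ) , ∫_{q_M}^Q v )`. -/
def Lclab (Q : ℝ) (M : ℕ) (hM : 1 ≤ M) (v : ℝ → ℝ) (q b : ℕ → ℝ) : ℝ :=
  max ((Finset.Icc 1 M).sup' (Finset.nonempty_Icc.mpr hM)
        (fun k => max (q k * b k) (∫ x in q (k - 1)..Q, pos (v x - b k))))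
      (∫ x in q M..Q, v x)

/-- A minimax-loss `M`-point bid in the constrained uniform-price auction. -/
def IsMinimaxCLAB (Q : ℝ) (M : ℕ) (hM : 1 ≤ M) (v : ℝ → ℝ) (q b : ℕ → ℝ) : Prop :=
  IsBidPts Q M q b ∧
    ∀ q' b', IsBidPts Q M q' b' → Lclab Q M hM v q b ≤ Lclab Q M hM v q' b'

/-- The marginal value function: weakly decreasing, nonnegative and integrable on `[0,Q]`. -/
def IsValueFn (Q : ℝ) (v : ℝ → ℝ) : Prop :=
  AntitoneOn v (Set.Icc 0 Q) ∧ (∀ x ∈ Set.Icc (0:ℝ) Q, 0 ≤ v x) ∧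
    IntervalIntegrable v volume 0 Q

/-- Quantity points all lie on the grid `{0, Q/M_q, 2Q/M_q, …, Q}`. -/
def OnGrid (Q : ℝ) (Mq M : ℕ) (q : ℕ → ℝ) : Prop :=
  ∀ k ≤ M, ∃ j : ℕ, j ≤ Mq ∧ q k = (j : ℝ) * (Q / Mq)

namespace ApproxPab
variable {Q : ℝ} {M : ℕ} {q b : ℕ → ℝ}

lemma qm {j k : ℕ} (h0 : ∀ i < M, q i ≤ q (i+1)) (hjk : j ≤ k) (hk : k ≤ M) : q j ≤ q k := by
  induction k with
  | zero => simp_all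
  | succ n ih =>
    rcases Nat.eq_or_lt_of_le hjk with rfl | hlt
    · exact le_refl _
    · exact le_trans (ih (by omega) (by omega)) (h0 n (by omega))

lemma q_mono (h : IsBidPts Q M q b) {j k : ℕ} (hjk : j ≤ k) (hk : k ≤ M) : q j ≤ q k :=
  qm h.2.1 hjk hk

lemma q_nonneg (h : IsBidPts Q M q b) {k : ℕ} (hk : k ≤ M) : 0 ≤ q k := by
  have := q_mono h (Nat.zero_le k) hk
  rw [h.1] at this; exact this

lemma b_mono (h : IsBidPts Q M q b) {j k : ℕ} (hj : 1 ≤ j) (hjk : j ≤ k) (hk : k ≤ M) :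
    b k ≤ b j := by
  induction k with
  | zero => omega
  | succ n ih =>
    rcases Nat.eq_or_lt_of_le hjk with rfl | hlt
    · exact le_refl _
    · exact le_trans (h.2.2.2.1 n (by omega) (by omega))
        (ih (Nat.lt_succ_iff.mp hlt) (by omega))

lemma b_nonneg (h : IsBidPts Q M q b) {k : ℕ} (hk1 : 1 ≤ k) (hk : k ≤ M) : 0 ≤ b k :=
  le_trans h.2.2.2.2 (b_mono h hk1 hk (le_refl _))

lemma bhat_eq (h0 : ∀ i < M, q i ≤ q (i+1)) {k : ℕ} (hk1 : 1 ≤ k) (hk : k ≤ M)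
    {x : ℝ} (hx : q (k-1) ≤ x ∧ x < q k) : bhat M q b x = b k := by
  unfold bhat
  rw [Finset.sum_eq_single_of_mem k (Finset.mem_Icc.mpr ⟨hk1, hk⟩)]
  · simp [hx]
  · intro j hj hne
    rw [if_neg]
    rintro ⟨h1, h2⟩
    rw [Finset.mem_Icc] at hj
    rcases lt_or_gt_of_ne hne with hlt | hgt
    · exact absurd (lt_of_lt_of_le h2 (le_trans (qm h0 (by omega) (by omega)) hx.1)) (lt_irrefl x)
    · exact absurd (lt_of_lt_of_le hx.2 (le_trans (qm h0 (by omega) (by omega)) h1)) (lt_irrefl x)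

lemma bhat_cases (h0 : ∀ i < M, q i ≤ q (i+1)) (x : ℝ) :
    bhat M q b x = 0 ∨
      ∃ k, 1 ≤ k ∧ k ≤ M ∧ q (k-1) ≤ x ∧ x < q k ∧ bhat M q b x = b k := by
  by_cases h : ∃ k, 1 ≤ k ∧ k ≤ M ∧ q (k-1) ≤ x ∧ x < q k
  · obtain ⟨k, h1, h2, h3, h4⟩ := h
    exact Or.inr ⟨k, h1, h2, h3, h4, bhat_eq h0 h1 h2 ⟨h3, h4⟩⟩
  · push_neg at h
    left
    unfold bhat
    apply Finset.sum_eq_zero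
    intro k hk
    rw [Finset.mem_Icc] at hk
    rw [if_neg]
    rintro ⟨a1, a2⟩
    exact absurd a2 (not_lt.mpr (h k hk.1 hk.2 a1))

lemma bhat_nonneg (h : IsBidPts Q M q b) (x : ℝ) : 0 ≤ bhat M q b x := by
  rcases bhat_cases h.2.1 x with h0 | ⟨k, h1, h2, _, _, h5⟩
  · rw [h0]
  · rw [h5]; exact b_nonneg h h1 h2

lemma bhat_le (h : IsBidPts Q M q b) {k : ℕ} (hk1 : 1 ≤ k) (hk : k ≤ M)
    {x : ℝ} (hx : q (k-1) ≤ x) : bhat M q b x ≤ b k := by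
  rcases bhat_cases (b := b) h.2.1 x with h0 | ⟨j, h1, h2, h3, h4, h5⟩
  · rw [h0]; exact b_nonneg h hk1 hk
  · rw [h5]
    rcases le_or_gt k j with hkj | hjk
    · exact b_mono h hk1 hkj h2
    · -- j < k : x < q j ≤ q (k-1) ≤ x
      exact absurd (lt_of_lt_of_le h4 (le_trans (q_mono h (by omega) (by omega)) hx)) (lt_irrefl x)

lemma bhat_ge (h : IsBidPts Q M q b) {k : ℕ} (hk1 : 1 ≤ k) (hk : k ≤ M)
    {x : ℝ} (hx0 : 0 ≤ x) (hx : x < q k) : b k ≤ bhat M q b x := by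
  have hex : ∃ j, x < q j := ⟨k, hx⟩
  classical
  set j := Nat.find hex with hj
  have hxj : x < q j := Nat.find_spec hex
  have hjk : j ≤ k := Nat.find_le hx
  have hj1 : 1 ≤ j := by
    rcases Nat.eq_zero_or_pos j with h0 | h1
    · rw [h0] at hxj; rw [h.1] at hxj; exact absurd hxj (not_lt.mpr hx0)
    · exact h1
  have hqj : q (j - 1) ≤ x := by
    have := Nat.find_min hex (m := j - 1) (by omega)
    exact not_lt.mp this
  rw [bhat_eq h.2.1 hj1 (le_trans hjk hk) ⟨hqj, hxj⟩]
  exact b_mono h hj1 hjk hk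

lemma bhat_antitone (h : IsBidPts Q M q b) {x y : ℝ} (hx : 0 ≤ x) (hxy : x ≤ y) :
    bhat M q b y ≤ bhat M q b x := by
  rcases bhat_cases (b := b) h.2.1 y with h0 | ⟨k, h1, h2, h3, h4, h5⟩
  · rw [h0]; exact bhat_nonneg h x
  · rw [h5]; exact bhat_ge h h1 h2 hx (lt_of_le_of_lt hxy h4)

lemma bhat_zero_of_ge (h : IsBidPts Q M q b) {x : ℝ} (hx : q M ≤ x) : bhat M q b x = 0 := by
  rcases bhat_cases (b := b) h.2.1 x with h0 | ⟨k, h1, h2, h3, h4, h5⟩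
  · exact h0
  · exact absurd (lt_of_lt_of_le h4 (le_trans (q_mono h h2 (le_refl _)) hx)) (lt_irrefl x)

lemma bhat_le_b1 (h : IsBidPts Q M q b) (hM : 1 ≤ M) (x : ℝ) : bhat M q b x ≤ b 1 := by
  rcases bhat_cases (b := b) h.2.1 x with h0 | ⟨k, h1, h2, _, _, h5⟩
  · rw [h0]; exact b_nonneg h le_rfl hM
  · rw [h5]; exact b_mono h le_rfl h1 h2

lemma bhat_intervalIntegrable (a c : ℝ) :
    IntervalIntegrable (bhat M q b) volume a c := by
  have heq : bhat M q b = ∑ k ∈ Finset.Icc 1 M,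
      (fun x => if q (k - 1) ≤ x ∧ x < q k then b k else 0) := by
    funext x
    rw [Finset.sum_apply]
    rfl
  rw [heq]
  apply IntervalIntegrable.sum
  intro k _
  have : (fun x => if q (k - 1) ≤ x ∧ x < q k then b k else 0)
      = (Set.Ico (q (k-1)) (q k)).indicator (fun _ => b k) := by
    funext x
    by_cases hx : q (k-1) ≤ x ∧ x < q k
    · rw [if_pos hx, Set.indicator_of_mem (Set.mem_Ico.mpr hx)]
    · rw [if_neg hx, Set.indicator_of_notMem (fun hmem => hx (Set.mem_Ico.mp hmem))]
  rw [this]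
  rw [intervalIntegrable_iff]
  apply MeasureTheory.Integrable.integrableOn
  rw [MeasureTheory.integrable_indicator_iff measurableSet_Ico]
  apply (MeasureTheory.integrableOn_const_iff).mpr
  right
  rw [Real.volume_Ico]
  exact ENNReal.ofReal_lt_top

lemma pos_intervalIntegrable {f : ℝ → ℝ} {a c : ℝ} (h : IntervalIntegrable f volume a c)
    (r : ℝ) : IntervalIntegrable (fun x => pos (f x - r)) volume a c := by
  have h2 : IntervalIntegrable (fun x => f x - r) volume a c := h.sub intervalIntegrable_const
  exact ⟨h2.1.sup integrableOn_zero, h2.2.sup integrableOn_zero⟩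


variable {v : ℝ → ℝ}

lemma v_sub_integrable (hv : IsValueFn Q v) (hQ : 0 ≤ Q) {a c : ℝ}
    (ha : a ∈ Set.Icc 0 Q) (hc : c ∈ Set.Icc 0 Q) :
    IntervalIntegrable v volume a c := by
  apply hv.2.2.mono_set
  rw [Set.uIcc_of_le hQ]
  exact Set.uIcc_subset_Icc ha hc

lemma Rcpab_eq (t : ℝ) :
    Rcpab Q M v q b t = (∫ x in (0:ℝ)..t, bhat M q b x) - t * bhat M q b t
      + ∫ x in t..Q, pos (v x - bhat M q b t) := by
  unfold Rcpab
  rw [intervalIntegral.integral_sub (bhat_intervalIntegrable 0 t) intervalIntegrable_const,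
    intervalIntegral.integral_const, smul_eq_mul, sub_zero]

lemma Rcpab_bound (h : IsBidPts Q M q b) (hv : IsValueFn Q v) (hQ : 0 ≤ Q) (hM : 1 ≤ M)
    {t : ℝ} (ht : t ∈ Set.Icc 0 Q) :
    Rcpab Q M v q b t ≤ Q * b 1 + ∫ x in (0:ℝ)..Q, v x := by
  rw [Rcpab_eq]
  have hb1 : 0 ≤ b 1 := b_nonneg h le_rfl hM
  have h1 : (∫ x in (0:ℝ)..t, bhat M q b x) ≤ t * b 1 := by
    calc (∫ x in (0:ℝ)..t, bhat M q b x) ≤ ∫ _x in (0:ℝ)..t, b 1 := by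
          apply intervalIntegral.integral_mono_on ht.1 (bhat_intervalIntegrable 0 t)
            intervalIntegrable_const
          intro x _
          exact bhat_le_b1 h hM x
      _ = t * b 1 := by rw [intervalIntegral.integral_const, smul_eq_mul, sub_zero]
  have h2 : (∫ x in t..Q, pos (v x - bhat M q b t)) ≤ ∫ x in t..Q, v x := by
    apply intervalIntegral.integral_mono_on ht.2
      (pos_intervalIntegrable (v_sub_integrable hv hQ ht (Set.right_mem_Icc.mpr hQ)) _)
      (v_sub_integrable hv hQ ht (Set.right_mem_Icc.mpr hQ))
    intro x hx
    have hx' : x ∈ Set.Icc 0 Q := ⟨le_trans ht.1 hx.1, hx.2⟩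
    have hvx : 0 ≤ v x := hv.2.1 x hx'
    unfold pos
    rw [max_le_iff]
    exact ⟨sub_le_self _ (bhat_nonneg h t), hvx⟩
  have h3 : (∫ x in t..Q, v x) ≤ ∫ x in (0:ℝ)..Q, v x := by
    rw [← intervalIntegral.integral_add_adjacent_intervals
      (v_sub_integrable hv hQ (Set.left_mem_Icc.mpr hQ) ht)
      (v_sub_integrable hv hQ ht (Set.right_mem_Icc.mpr hQ))]
    have : 0 ≤ ∫ x in (0:ℝ)..t, v x := by
      apply intervalIntegral.integral_nonneg ht.1
      intro x hx
      exact hv.2.1 x ⟨hx.1, le_trans hx.2 ht.2⟩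
    linarith
  have h4 : 0 ≤ t * bhat M q b t := mul_nonneg ht.1 (bhat_nonneg h t)
  have h5 : t * b 1 ≤ Q * b 1 := mul_le_mul_of_nonneg_right ht.2 hb1
  linarith

lemma Rcpab_bddAbove (h : IsBidPts Q M q b) (hv : IsValueFn Q v) (hQ : 0 ≤ Q) (hM : 1 ≤ M) :
    BddAbove {r : ℝ | ∃ t ∈ Set.Icc (0:ℝ) Q, r = Rcpab Q M v q b t} := by
  refine ⟨Q * b 1 + ∫ x in (0:ℝ)..Q, v x, ?_⟩
  rintro r ⟨t, ht, rfl⟩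
  exact Rcpab_bound h hv hQ hM ht

lemma Rcpab_le_Lcpab (h : IsBidPts Q M q b) (hv : IsValueFn Q v) (hQ : 0 ≤ Q) (hM : 1 ≤ M)
    {t : ℝ} (ht : t ∈ Set.Icc 0 Q) : Rcpab Q M v q b t ≤ Lcpab Q M v q b :=
  le_csSup (Rcpab_bddAbove h hv hQ hM) ⟨t, ht, rfl⟩

lemma Lcpab_nonneg (h : IsBidPts Q M q b) (hv : IsValueFn Q v) (hQ : 0 ≤ Q) (hM : 1 ≤ M) :
    0 ≤ Lcpab Q M v q b := by
  have hQmem : Q ∈ Set.Icc (0:ℝ) Q := Set.right_mem_Icc.mpr hQ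
  refine le_trans ?_ (Rcpab_le_Lcpab h hv hQ hM hQmem)
  rw [Rcpab_eq, bhat_zero_of_ge h h.2.2.1, intervalIntegral.integral_same, mul_zero,
    sub_zero, add_zero]
  apply intervalIntegral.integral_nonneg hQ
  intro x _
  exact bhat_nonneg h x


lemma bhat_pointwise_le {q' : ℕ → ℝ} (h : IsBidPts Q M q b) (h' : IsBidPts Q M q' b)
    (hle : ∀ k ≤ M, q' k ≤ q k) (x : ℝ) : bhat M q' b x ≤ bhat M q b x := by
  rcases bhat_cases (b := b) h'.2.1 x with h0 | ⟨k, h1, h2, h3, h4, h5⟩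
  · rw [h0]; exact bhat_nonneg h x
  · rw [h5]
    have hx0 : 0 ≤ x := le_trans (q_nonneg h' (by omega)) h3
    exact bhat_ge h h1 h2 hx0 (lt_of_lt_of_le h4 (hle k h2))

lemma regret_compare {q' : ℕ → ℝ} {δ : ℝ} (h : IsBidPts Q M q b) (h' : IsBidPts Q M q' b)
    (hle : ∀ k ≤ M, q' k ≤ q k) (hv : IsValueFn Q v) (hQ : 0 ≤ Q)
    (hδ0 : 0 ≤ δ) (hδQ : δ ≤ Q)
    {t s : ℝ} (ht0 : 0 ≤ t) (hts : t ≤ s) (hsQ : s ≤ Q) (hstδ : s ≤ t + δ)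
    (hcs : bhat M q b s ≤ bhat M q' b t) :
    Rcpab Q M v q' b t ≤ Rcpab Q M v q b s + ∫ x in (0:ℝ)..δ, v x := by
  set c1 := bhat M q' b t with hc1
  set c2 := bhat M q b s with hc2
  have hc1nn : 0 ≤ c1 := bhat_nonneg h' t
  have hc2nn : 0 ≤ c2 := bhat_nonneg h s
  have htQ : t ≤ Q := le_trans hts hsQ
  have htmem : t ∈ Set.Icc (0:ℝ) Q := ⟨ht0, htQ⟩
  have hsmem : s ∈ Set.Icc (0:ℝ) Q := ⟨le_trans ht0 hts, hsQ⟩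
  have hQmem : Q ∈ Set.Icc (0:ℝ) Q := Set.right_mem_Icc.mpr hQ
  rw [Rcpab_eq, Rcpab_eq]
  -- payment part
  have hA : (∫ x in (0:ℝ)..t, bhat M q' b x) ≤ ∫ x in (0:ℝ)..t, bhat M q b x := by
    apply intervalIntegral.integral_mono_on ht0 (bhat_intervalIntegrable 0 t)
      (bhat_intervalIntegrable 0 t)
    intro x _
    exact bhat_pointwise_le h h' hle x
  have hB : (s - t) * c2 ≤ ∫ x in t..s, bhat M q b x := by
    have : ((s - t) * c2) = ∫ _x in t..s, c2 := by
      rw [intervalIntegral.integral_const, smul_eq_mul]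
    rw [this]
    apply intervalIntegral.integral_mono_on hts intervalIntegrable_const
      (bhat_intervalIntegrable t s)
    intro x hx
    exact bhat_antitone h (le_trans ht0 hx.1) hx.2
  have hsplit : (∫ x in (0:ℝ)..t, bhat M q b x) + (∫ x in t..s, bhat M q b x)
      = ∫ x in (0:ℝ)..s, bhat M q b x :=
    intervalIntegral.integral_add_adjacent_intervals (bhat_intervalIntegrable 0 t)
      (bhat_intervalIntegrable t s)
  -- regret part
  have hC1 : (∫ x in t..Q, pos (v x - c1))
      = (∫ x in t..s, pos (v x - c1)) + ∫ x in s..Q, pos (v x - c1) :=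
    (intervalIntegral.integral_add_adjacent_intervals
      (pos_intervalIntegrable (v_sub_integrable hv hQ htmem hsmem) _)
      (pos_intervalIntegrable (v_sub_integrable hv hQ hsmem hQmem) _)).symm
  have hC2 : (∫ x in s..Q, pos (v x - c1)) ≤ ∫ x in s..Q, pos (v x - c2) := by
    apply intervalIntegral.integral_mono_on hsQ
      (pos_intervalIntegrable (v_sub_integrable hv hQ hsmem hQmem) _)
      (pos_intervalIntegrable (v_sub_integrable hv hQ hsmem hQmem) _)
    intro x _
    exact max_le_max (by linarith) le_rfl
  have hC3 : (∫ x in t..s, pos (v x - c1)) ≤ ∫ x in t..s, v x := by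
    apply intervalIntegral.integral_mono_on hts
      (pos_intervalIntegrable (v_sub_integrable hv hQ htmem hsmem) _)
      (v_sub_integrable hv hQ htmem hsmem)
    intro x hx
    have hx' : x ∈ Set.Icc 0 Q := ⟨le_trans ht0 hx.1, le_trans hx.2 hsQ⟩
    unfold pos
    rw [max_le_iff]
    exact ⟨sub_le_self _ hc1nn, hv.2.1 x hx'⟩
  have hC4 : (∫ x in t..s, v x) ≤ ∫ x in (0:ℝ)..(s - t), v x := by
    have hshift : (∫ x in (0:ℝ)..(s - t), v (x + t)) = ∫ x in t..s, v x := by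
      rw [intervalIntegral.integral_comp_add_right]
      norm_num
    rw [← hshift]
    have hcomp := (v_sub_integrable hv hQ htmem hsmem).comp_add_right t
    rw [sub_self] at hcomp
    have hst : s - t ∈ Set.Icc (0:ℝ) Q := ⟨by linarith, by linarith⟩
    apply intervalIntegral.integral_mono_on (by linarith) hcomp
      (v_sub_integrable hv hQ (Set.left_mem_Icc.mpr hQ) hst)
    intro x hx
    exact hv.1 ⟨hx.1, by linarith [hx.2]⟩ ⟨by linarith [hx.1], by linarith [hx.2]⟩
      (by linarith)
  have hC5 : (∫ x in (0:ℝ)..(s - t), v x) ≤ ∫ x in (0:ℝ)..δ, v x := by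
    have hst : s - t ∈ Set.Icc (0:ℝ) Q := ⟨by linarith, by linarith⟩
    rw [← intervalIntegral.integral_add_adjacent_intervals
      (v_sub_integrable hv hQ (Set.left_mem_Icc.mpr hQ) hst)
      (v_sub_integrable hv hQ hst ⟨hδ0, hδQ⟩)]
    have : 0 ≤ ∫ x in (s - t)..δ, v x := by
      apply intervalIntegral.integral_nonneg (by linarith)
      intro x hx
      exact hv.2.1 x ⟨le_trans (by linarith) hx.1, le_trans hx.2 hδQ⟩
    linarith
  have hD : t * c2 ≤ t * c1 := mul_le_mul_of_nonneg_left hcs ht0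
  linarith


lemma exists_interval (h : IsBidPts Q M q b) {t : ℝ} (ht0 : 0 ≤ t) (htl : t < q M) :
    ∃ k, 1 ≤ k ∧ k ≤ M ∧ q (k-1) ≤ t ∧ t < q k := by
  have hex : ∃ j, t < q j := ⟨M, htl⟩
  classical
  refine ⟨Nat.find hex, ?_, Nat.find_le htl, ?_, Nat.find_spec hex⟩
  · rcases Nat.eq_zero_or_pos (Nat.find hex) with h0 | h1
    · have := Nat.find_spec hex
      rw [h0, h.1] at this
      exact absurd this (not_lt.mpr ht0)
    · exact h1
  · exact not_lt.mp (Nat.find_min hex (m := Nat.find hex - 1) (by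
      have : 1 ≤ Nat.find hex := by
        rcases Nat.eq_zero_or_pos (Nat.find hex) with h0 | h1
        · have := Nat.find_spec hex
          rw [h0, h.1] at this
          exact absurd this (not_lt.mpr ht0)
        · exact h1
      omega))

lemma exists_s {q' : ℕ → ℝ} {δ : ℝ} (h : IsBidPts Q M q b) (h' : IsBidPts Q M q' b)
    (hle : ∀ k ≤ M, q' k ≤ q k) (hδ : ∀ k ≤ M, q k ≤ q' k + δ) (hδ0 : 0 ≤ δ)
    {t : ℝ} (ht : t ∈ Set.Icc (0:ℝ) Q) :
    ∃ s, t ≤ s ∧ s ≤ Q ∧ s ≤ t + δ ∧ bhat M q b s ≤ bhat M q' b t := by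
  rcases le_or_gt (q' M) t with hcase | hcase
  · refine ⟨max t (q M), le_max_left _ _, max_le ht.2 h.2.2.1, ?_, ?_⟩
    · apply max_le (by linarith [ht.1])
      calc q M ≤ q' M + δ := hδ M le_rfl
        _ ≤ t + δ := by linarith
    · rw [bhat_zero_of_ge h (le_max_right _ _), bhat_zero_of_ge h' hcase]
  · obtain ⟨k, hk1, hkM, hkl, hkr⟩ := exists_interval h' ht.1 hcase
    refine ⟨max t (q (k-1)), le_max_left _ _, max_le ht.2 (le_trans (q_mono h (by omega) le_rfl) h.2.2.1), ?_, ?_⟩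
    · apply max_le (by linarith [ht.1])
      calc q (k-1) ≤ q' (k-1) + δ := hδ (k-1) (by omega)
        _ ≤ t + δ := by linarith
    · rw [bhat_eq h'.2.1 hk1 hkM ⟨hkl, hkr⟩]
      exact bhat_le h hk1 hkM (le_max_right _ _)

lemma Lcpab_le_round {q' : ℕ → ℝ} {δ : ℝ} (h : IsBidPts Q M q b) (h' : IsBidPts Q M q' b)
    (hle : ∀ k ≤ M, q' k ≤ q k) (hδ : ∀ k ≤ M, q k ≤ q' k + δ)
    (hv : IsValueFn Q v) (hQ : 0 ≤ Q) (hM : 1 ≤ M) (hδ0 : 0 ≤ δ) (hδQ : δ ≤ Q) :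
    Lcpab Q M v q' b ≤ Lcpab Q M v q b + ∫ x in (0:ℝ)..δ, v x := by
  refine csSup_le ⟨Rcpab Q M v q' b 0, ⟨0, Set.left_mem_Icc.mpr hQ, rfl⟩⟩ ?_
  rintro r ⟨t, ht, rfl⟩
  obtain ⟨s, hts, hsQ, hstδ, hcs⟩ := exists_s h h' hle hδ hδ0 ht
  calc Rcpab Q M v q' b t ≤ Rcpab Q M v q b s + ∫ x in (0:ℝ)..δ, v x :=
        regret_compare h h' hle hv hQ hδ0 hδQ ht.1 hts hsQ hstδ hcs
    _ ≤ Lcpab Q M v q b + ∫ x in (0:ℝ)..δ, v x := by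
        have := Rcpab_le_Lcpab h hv hQ hM (t := s) ⟨le_trans ht.1 hts, hsQ⟩
        linarith

end ApproxPab
/-- rounding the quantity points of a minimax-loss constrained pay-as-bid
bid down to the grid `{0, Q/M_q, …, Q}` yields a feasible grid bid whose loss exceeds the
grid-constrained minimax loss `L*` by at most `∫_0^{Q/M_q} v`. -/
theorem approximate_minimax_loss_pab
    (Q : ℝ) (hQ : 0 < Q) (Mb Mq : ℕ) (hMb : 1 ≤ Mb) (hMq : 1 ≤ Mq)
    (v : ℝ → ℝ) (hv : IsValueFn Q v)
    (q b : ℕ → ℝ) (hqb : IsMinimaxCPAB Q Mb v q b)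
    (Lstar : ℝ)
    (hLstar : Lstar = sInf {L : ℝ | ∃ q' b', IsBidPts Q Mb q' b' ∧ OnGrid Q Mq Mb q' ∧
      L = Lcpab Q Mb v q' b'})
    (q' : ℕ → ℝ) (hq' : ∀ k, q' k = (⌊(Mq : ℝ) * q k / Q⌋ : ℝ) * (Q / Mq)) :
    IsBidPts Q Mb q' b ∧ OnGrid Q Mq Mb q' ∧
    Lstar ≤ Lcpab Q Mb v q' b ∧
    Lcpab Q Mb v q' b ≤ Lstar + ∫ x in (0:ℝ)..(Q / Mq), v x := by
  have hbid := hqb.1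
  have hMqR : (0:ℝ) < (Mq:ℝ) := by exact_mod_cast hMq
  have hQMq : (0:ℝ) < Q / Mq := div_pos hQ hMqR
  have hδQ : Q / Mq ≤ Q := by
    rw [div_le_iff₀ hMqR]
    nlinarith [hQ.le, show (1:ℝ) ≤ (Mq:ℝ) by exact_mod_cast hMq]
  -- basic facts about y k = Mq * q k / Q
  have hqk_eq : ∀ k, ((Mq:ℝ) * q k / Q) * (Q / Mq) = q k := by
    intro k
    field_simp
  have hle : ∀ k ≤ Mb, q' k ≤ q k := by
    intro k _
    rw [hq' k]
    calc (⌊(Mq:ℝ) * q k / Q⌋ : ℝ) * (Q / Mq) ≤ ((Mq:ℝ) * q k / Q) * (Q / Mq) :=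
          mul_le_mul_of_nonneg_right (Int.floor_le _) hQMq.le
      _ = q k := hqk_eq k
  have hδ : ∀ k ≤ Mb, q k ≤ q' k + Q / Mq := by
    intro k _
    rw [hq' k]
    have h1 : (Mq:ℝ) * q k / Q < (⌊(Mq:ℝ) * q k / Q⌋ : ℝ) + 1 := Int.lt_floor_add_one _
    have h3 : ((Mq:ℝ) * q k / Q) * (Q / Mq) ≤ ((⌊(Mq:ℝ) * q k / Q⌋ : ℝ) + 1) * (Q / Mq) :=
      mul_le_mul_of_nonneg_right h1.le hQMq.le
    rw [hqk_eq k, add_mul, one_mul] at h3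
    exact h3
  have hbid' : IsBidPts Q Mb q' b := by
    refine ⟨?_, ?_, ?_, hbid.2.2.2.1, hbid.2.2.2.2⟩
    · rw [hq' 0, hbid.1]
      norm_num
    · intro k hk
      rw [hq' k, hq' (k+1)]
      apply mul_le_mul_of_nonneg_right _ hQMq.le
      have : (Mq:ℝ) * q k / Q ≤ (Mq:ℝ) * q (k+1) / Q := by
        gcongr
        exact hbid.2.1 k hk
      exact_mod_cast Int.floor_le_floor this
    · exact le_trans (hle Mb le_rfl) hbid.2.2.1
  have hgrid : OnGrid Q Mq Mb q' := by
    intro k hk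
    have hy0 : (0:ℝ) ≤ (Mq:ℝ) * q k / Q :=
      div_nonneg (mul_nonneg hMqR.le (ApproxPab.q_nonneg hbid hk)) hQ.le
    have hfl0 : (0:ℤ) ≤ ⌊(Mq:ℝ) * q k / Q⌋ := Int.floor_nonneg.mpr hy0
    have hyMq : (Mq:ℝ) * q k / Q ≤ (Mq:ℝ) := by
      rw [div_le_iff₀ hQ]
      have : q k ≤ Q := le_trans (ApproxPab.q_mono hbid hk le_rfl) hbid.2.2.1
      nlinarith
    have hflMq : ⌊(Mq:ℝ) * q k / Q⌋ ≤ (Mq:ℤ) := by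
      rw [Int.floor_le_iff] -- maybe wrong; fallback below
      push_cast
      nlinarith
    refine ⟨(⌊(Mq:ℝ) * q k / Q⌋).toNat, ?_, ?_⟩
    · omega
    · rw [hq' k]
      congr 1
      exact_mod_cast (Int.toNat_of_nonneg hfl0).symm
  have hS : {L : ℝ | ∃ q'' b'', IsBidPts Q Mb q'' b'' ∧ OnGrid Q Mq Mb q'' ∧
      L = Lcpab Q Mb v q'' b''}.Nonempty := by
    refine ⟨Lcpab Q Mb v (fun _ => 0) (fun _ => 0), (fun _ => 0), (fun _ => 0), ?_, ?_, rfl⟩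
    · exact ⟨rfl, fun _ _ => le_rfl, hQ.le, fun _ _ _ => le_rfl, le_rfl⟩
    · intro k _
      exact ⟨0, Nat.zero_le _, by norm_num⟩
  have hbdd : BddBelow {L : ℝ | ∃ q'' b'', IsBidPts Q Mb q'' b'' ∧ OnGrid Q Mq Mb q'' ∧
      L = Lcpab Q Mb v q'' b''} := by
    refine ⟨0, ?_⟩
    rintro L ⟨q'', b'', hb'', _, rfl⟩
    exact ApproxPab.Lcpab_nonneg hb'' hv hQ.le hMb
  have hLstar1 : Lstar ≤ Lcpab Q Mb v q' b := by
    rw [hLstar]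
    exact csInf_le hbdd ⟨q', b, hbid', hgrid, rfl⟩
  have hLstar2 : Lcpab Q Mb v q b ≤ Lstar := by
    rw [hLstar]
    apply le_csInf hS
    rintro L ⟨q'', b'', hb'', _, rfl⟩
    exact hqb.2 q'' b'' hb''
  have hmain : Lcpab Q Mb v q' b ≤ Lcpab Q Mb v q b + ∫ x in (0:ℝ)..(Q / Mq), v x :=
    ApproxPab.Lcpab_le_round hbid hbid' hle hδ hv hQ.le hMb hQMq.le hδQ
  exact ⟨hbid', hgrid, hLstar1, by linarith⟩

end
end
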